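/- arXiv:1605.03524 — 2 statements merged into one kernel-verified Lean document; each statement's English description precedes it below -/
import Mathlib

section
/- For every integer n ≥ 1, the polynomial identity (1+q)·Cat⁺⁺(A_n; q) + q·Cat⁺⁺(A_{n−1}; q) = q·Cat(A_{n−1}; q) holds. -/
open Polynomial

/-- A positive root of type Aₙ: an interval `[i, j]` with `1 ≤ i ≤ j ≤ n`. -/
def ARoot (n : ℕ) : Type := {p : ℕ × ℕ // 1 ≤ p.1 ∧ p.1 ≤ p.2 ∧ p.2 ≤ n}

/-- The root poset order of type Aₙ: containment of intervals. -/
def aLe (n : ℕ) (x y : ARoot n) : Prop := y.1.1 ≤ x.1.1 ∧ x.1.2 ≤ y.1.2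

/-- `x` is a simple root of type Aₙ: a singleton interval. -/
def aSimple (n : ℕ) (x : ARoot n) : Prop := x.1.1 = x.1.2

/-- A set `A` of type-Aₙ roots has full support: the union of its intervals is `{1, …, n}`. -/
def aFullSupport (n : ℕ) (A : Finset (ARoot n)) : Prop :=
  ∀ m : ℕ, 1 ≤ m → m ≤ n → ∃ x ∈ A, x.1.1 ≤ m ∧ m ≤ x.1.2

/-- `Cat(Aₙ; q) = Σ_A q^|A|`, the sum over all antichains `A` in the root poset of
type Aₙ. -/
noncomputable def CatA (n : ℕ) : Polynomial ℚ :=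
  ∑ᶠ A ∈ {A : Finset (ARoot n) | IsAntichain (aLe n) (A : Set (ARoot n))}, X ^ A.card

/-- `Cat⁺⁺(Aₙ; q) = Σ_A q^|A|`, the sum over antichains `A` in the root poset of type Aₙ
that contain no simple root and have full support. -/
noncomputable def CatppA (n : ℕ) : Polynomial ℚ :=
  ∑ᶠ A ∈ {A : Finset (ARoot n) | IsAntichain (aLe n) (A : Set (ARoot n)) ∧
      (∀ x ∈ A, ¬ aSimple n x) ∧ aFullSupport n A}, X ^ A.card

open Finset
open scoped Classical

namespace CatAux
def Bnd (n : ℕ) (A : Finset (ℕ × ℕ)) : Prop := ∀ x ∈ A, 1 ≤ x.1 ∧ x.1 ≤ x.2 ∧ x.2 ≤ n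
def AC (A : Finset (ℕ × ℕ)) : Prop := ∀ x ∈ A, ∀ y ∈ A, x ≠ y → ¬(y.1 ≤ x.1 ∧ x.2 ≤ y.2)
def box (n : ℕ) : Finset (ℕ × ℕ) := Finset.Icc 1 n ×ˢ Finset.Icc 1 n
noncomputable def cA (n : ℕ) : Finset (Finset (ℕ × ℕ)) :=
  (box n).powerset.filter (fun A => AC A ∧ Bnd n A)
lemma mem_cA {n : ℕ} {A : Finset (ℕ × ℕ)} : A ∈ cA n ↔ AC A ∧ Bnd n A := by
  constructor
  · intro h; exact (Finset.mem_filter.mp h).2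
  · intro h
    refine Finset.mem_filter.mpr ⟨Finset.mem_powerset.mpr ?_, h⟩
    intro x hx
    have := h.2 x hx
    simp only [box, Finset.mem_product, Finset.mem_Icc]
    omega

-- chunk 2
lemma mem_cA_subset {n : ℕ} {A B : Finset (ℕ × ℕ)} (h : A ∈ cA n) (hBA : B ⊆ A) :
    B ∈ cA n := by
  rw [mem_cA] at h ⊢
  exact ⟨fun x hx y hy => h.1 x (hBA hx) y (hBA hy), fun x hx => h.2 x (hBA hx)⟩

lemma lt_snd {A : Finset (ℕ × ℕ)} (hAC : AC A) {x y : ℕ × ℕ} (hx : x ∈ A) (hy : y ∈ A)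
    (hne : x ≠ y) (h : y.1 ≤ x.1) : y.2 < x.2 := by
  have h1 := hAC x hx y hy hne
  push_neg at h1
  exact h1 h

lemma fst_inj {A : Finset (ℕ × ℕ)} (hAC : AC A) {x y : ℕ × ℕ} (hx : x ∈ A) (hy : y ∈ A)
    (h : x.1 = y.1) : x = y := by
  by_contra hne
  have h1 := lt_snd hAC hx hy hne h.ge
  have h2 := lt_snd hAC hy hx (Ne.symm hne) h.le
  omega

lemma snd_inj {A : Finset (ℕ × ℕ)} (hAC : AC A) {x y : ℕ × ℕ} (hx : x ∈ A) (hy : y ∈ A)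
    (h : x.2 = y.2) : x = y := by
  by_contra hne
  rcases le_total x.1 y.1 with hc | hc
  · have := lt_snd hAC hy hx (Ne.symm hne) hc; omega
  · have := lt_snd hAC hx hy hne hc; omega

noncomputable def lefts (A : Finset (ℕ × ℕ)) : Finset ℕ := A.image Prod.fst
noncomputable def rights (A : Finset (ℕ × ℕ)) : Finset ℕ := A.image Prod.snd
noncomputable def pcnt (S : Finset ℕ) (r : ℕ) : ℕ := (S.filter (· ≤ r)).card
def Dom (I J : Finset ℕ) : Prop := ∀ r, pcnt J r ≤ pcnt I r

noncomputable def cP (n : ℕ) : Finset (Finset ℕ × Finset ℕ) :=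
  ((Finset.Icc 1 n).powerset ×ˢ (Finset.Icc 1 n).powerset).filter
    (fun IJ => IJ.1.card = IJ.2.card ∧ Dom IJ.1 IJ.2)

lemma mem_cP {n : ℕ} {IJ : Finset ℕ × Finset ℕ} :
    IJ ∈ cP n ↔ (IJ.1 ⊆ Finset.Icc 1 n ∧ IJ.2 ⊆ Finset.Icc 1 n) ∧
      IJ.1.card = IJ.2.card ∧ Dom IJ.1 IJ.2 := by
  simp [cP, Finset.mem_filter, Finset.mem_product, Finset.mem_powerset, and_assoc]

lemma card_lefts {A : Finset (ℕ × ℕ)} (hAC : AC A) : (lefts A).card = A.card :=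
  Finset.card_image_of_injOn (fun x hx y hy h => fst_inj hAC hx hy h)

lemma card_rights {A : Finset (ℕ × ℕ)} (hAC : AC A) : (rights A).card = A.card :=
  Finset.card_image_of_injOn (fun x hx y hy h => snd_inj hAC hx hy h)

lemma pcnt_lefts {A : Finset (ℕ × ℕ)} (hAC : AC A) (r : ℕ) :
    pcnt (lefts A) r = (A.filter (fun x => x.1 ≤ r)).card := by
  rw [pcnt, lefts, Finset.filter_image]
  exact Finset.card_image_of_injOn
    (fun x hx y hy h => fst_inj hAC (Finset.mem_filter.mp hx).1 (Finset.mem_filter.mp hy).1 h)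

lemma pcnt_rights {A : Finset (ℕ × ℕ)} (hAC : AC A) (r : ℕ) :
    pcnt (rights A) r = (A.filter (fun x => x.2 ≤ r)).card := by
  rw [pcnt, rights, Finset.filter_image]
  exact Finset.card_image_of_injOn
    (fun x hx y hy h => snd_inj hAC (Finset.mem_filter.mp hx).1 (Finset.mem_filter.mp hy).1 h)

noncomputable def crossF (A : Finset (ℕ × ℕ)) (r : ℕ) : Finset (ℕ × ℕ) :=
  A.filter (fun x => x.1 ≤ r ∧ r + 1 ≤ x.2)

lemma cross_card {n : ℕ} {A : Finset (ℕ × ℕ)} (hA : A ∈ cA n) (r : ℕ) :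
    pcnt (lefts A) r = pcnt (rights A) r + (crossF A r).card := by
  obtain ⟨hAC, hB⟩ := mem_cA.mp hA
  rw [pcnt_lefts hAC, pcnt_rights hAC]
  have h1 : A.filter (fun x => x.1 ≤ r) =
      (A.filter (fun x => x.2 ≤ r)) ∪ crossF A r := by
    ext x
    simp only [Finset.mem_filter, Finset.mem_union, crossF]
    constructor
    · intro ⟨hx, h2⟩
      by_cases hc : x.2 ≤ r
      · exact Or.inl ⟨hx, hc⟩
      · exact Or.inr ⟨hx, h2, by omega⟩
    · rintro (⟨hx, h2⟩ | ⟨hx, h2, h3⟩)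
      · exact ⟨hx, le_trans (hB x hx).2.1 h2⟩
      · exact ⟨hx, h2⟩
  have h2 : Disjoint (A.filter (fun x => x.2 ≤ r)) (crossF A r) := by
    rw [Finset.disjoint_left]
    intro x hx hx'
    simp only [Finset.mem_filter, crossF] at hx hx'
    omega
  rw [h1, Finset.card_union_of_disjoint h2]

lemma encode_mem {n : ℕ} {A : Finset (ℕ × ℕ)} (hA : A ∈ cA n) :
    (lefts A, rights A) ∈ cP n := by
  obtain ⟨hAC, hB⟩ := mem_cA.mp hA
  refine mem_cP.mpr ⟨⟨?_, ?_⟩, ?_, ?_⟩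
  · intro i hi
    obtain ⟨x, hx, rfl⟩ := Finset.mem_image.mp hi
    have := hB x hx
    simp only [Finset.mem_Icc]; omega
  · intro j hj
    obtain ⟨x, hx, rfl⟩ := Finset.mem_image.mp hj
    have := hB x hx
    simp only [Finset.mem_Icc]; omega
  · rw [card_lefts hAC, card_rights hAC]
  · intro r
    show pcnt (rights A) r ≤ pcnt (lefts A) r
    rw [cross_card hA r]
    omega

lemma lefts_erase {A : Finset (ℕ × ℕ)} (hAC : AC A) {x : ℕ × ℕ} (hx : x ∈ A) :
    lefts (A.erase x) = (lefts A).erase x.1 := by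
  ext i
  simp only [lefts, Finset.mem_image, Finset.mem_erase]
  constructor
  · rintro ⟨y, ⟨hyx, hyA⟩, rfl⟩
    exact ⟨fun h => hyx (fst_inj hAC hyA hx h), y, hyA, rfl⟩
  · rintro ⟨hne, y, hy, rfl⟩
    exact ⟨y, ⟨fun h => hne (by rw [h]), hy⟩, rfl⟩

lemma rights_erase {A : Finset (ℕ × ℕ)} (hAC : AC A) {x : ℕ × ℕ} (hx : x ∈ A) :
    rights (A.erase x) = (rights A).erase x.2 := by
  ext j
  simp only [rights, Finset.mem_image, Finset.mem_erase]
  constructor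
  · rintro ⟨y, ⟨hyx, hyA⟩, rfl⟩
    exact ⟨fun h => hyx (snd_inj hAC hyA hx h), y, hyA, rfl⟩
  · rintro ⟨hne, y, hy, rfl⟩
    exact ⟨y, ⟨fun h => hne (by rw [h]), hy⟩, rfl⟩

/-- the maximal element of a nonempty antichain -/
lemma max_elt {n : ℕ} {A : Finset (ℕ × ℕ)} (hA : A ∈ cA n) (hne : A.Nonempty) :
    ∃ x ∈ A, (∀ y ∈ A, y.1 ≤ x.1) ∧ (∀ y ∈ A, y.2 ≤ x.2) := by
  obtain ⟨hAC, hB⟩ := mem_cA.mp hA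
  have hlne : (lefts A).Nonempty := hne.image _
  obtain ⟨x, hxA, hxmax⟩ := Finset.mem_image.mp ((lefts A).max'_mem hlne)
  refine ⟨x, hxA, ?_, ?_⟩
  · intro y hy
    rw [hxmax]
    exact Finset.le_max' _ _ (Finset.mem_image_of_mem _ hy)
  · intro y hy
    by_cases hxy : y = x
    · rw [hxy]
    · have h1 : y.1 ≤ x.1 := by
        rw [hxmax]; exact Finset.le_max' _ _ (Finset.mem_image_of_mem _ hy)
      exact (lt_snd hAC hxA hy (fun h => hxy h.symm) h1).le

lemma encode_inj {n : ℕ} : ∀ (k : ℕ) {A B : Finset (ℕ × ℕ)}, A.card ≤ k →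
    A ∈ cA n → B ∈ cA n → lefts A = lefts B → rights A = rights B → A = B := by
  intro k
  induction k with
  | zero =>
    intro A B hk hA hB hl _
    have hA0 : A = ∅ := Finset.card_eq_zero.mp (Nat.le_zero.mp hk)
    subst hA0
    have hlb : lefts B = ∅ := by rw [← hl]; simp [lefts]
    have : B = ∅ := by
      have := Finset.image_eq_empty.mp hlb
      exact this
    rw [this]
  | succ k ih =>
    intro A B hk hA hB hl hr
    by_cases hAe : A = ∅
    · subst hAe
      have hlb : lefts B = ∅ := by rw [← hl]; simp [lefts]
      rw [Finset.image_eq_empty.mp hlb]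
    · have hAne : A.Nonempty := Finset.nonempty_iff_ne_empty.mpr hAe
      obtain ⟨x, hxA, hx1, hx2⟩ := max_elt hA hAne
      have hBne : B.Nonempty := by
        by_contra h
        have hBe : B = ∅ := Finset.not_nonempty_iff_eq_empty.mp h
        subst hBe
        have hle : lefts A = ∅ := by rw [hl]; simp [lefts]
        rw [Finset.image_eq_empty.mp hle] at hAne
        exact absurd hAne (by simp)
      obtain ⟨y, hyB, hy1, hy2⟩ := max_elt hB hBne
      -- x = y since both are (max lefts, max rights)
      have hxy : x = y := by
        have h1 : x.1 = y.1 := by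
          have hxl : x.1 ∈ lefts B := by rw [← hl]; exact Finset.mem_image_of_mem _ hxA
        
          obtain ⟨z, hzB, hz⟩ := Finset.mem_image.mp hxl
          have hyl : y.1 ∈ lefts A := by rw [hl]; exact Finset.mem_image_of_mem _ hyB
          obtain ⟨w, hwA, hw⟩ := Finset.mem_image.mp hyl
          have := hy1 z hzB
          have := hx1 w hwA
          omega
        have h2 : x.2 = y.2 := by
          have hxl : x.2 ∈ rights B := by rw [← hr]; exact Finset.mem_image_of_mem _ hxA
          obtain ⟨z, hzB, hz⟩ := Finset.mem_image.mp hxl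
          have hyl : y.2 ∈ rights A := by rw [hr]; exact Finset.mem_image_of_mem _ hyB
          obtain ⟨w, hwA, hw⟩ := Finset.mem_image.mp hyl
          have := hy2 z hzB
          have := hx2 w hwA
          omega
        exact Prod.ext h1 h2
      subst hxy
      have hAC := (mem_cA.mp hA).1
      have hBC := (mem_cA.mp hB).1
      have hih := ih (A := A.erase x) (B := B.erase x)
        (by have := Finset.card_erase_of_mem hxA; omega)
        (mem_cA_subset hA (Finset.erase_subset _ _))
        (mem_cA_subset hB (Finset.erase_subset _ _))
        (by rw [lefts_erase hAC hxA, lefts_erase hBC hyB, hl])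
        (by rw [rights_erase hAC hxA, rights_erase hBC hyB, hr])
      have : insert x (A.erase x) = insert x (B.erase x) := by rw [hih]
      rwa [Finset.insert_erase hxA, Finset.insert_erase hyB] at this

lemma pcnt_le_card (S : Finset ℕ) (r : ℕ) : pcnt S r ≤ S.card :=
  Finset.card_le_card (Finset.filter_subset _ _)

lemma pcnt_subset {S T : Finset ℕ} (h : S ⊆ T) (r : ℕ) : pcnt S r ≤ pcnt T r :=
  Finset.card_le_card (Finset.filter_subset_filter _ h)

lemma pcnt_all {S : Finset ℕ} {r : ℕ} (h : ∀ s ∈ S, s ≤ r) : pcnt S r = S.card := by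
  rw [pcnt, Finset.filter_true_of_mem h]

lemma pcnt_erase {S : Finset ℕ} {a : ℕ} (ha : a ∈ S) (r : ℕ) :
    pcnt (S.erase a) r = if a ≤ r then pcnt S r - 1 else pcnt S r := by
  unfold pcnt
  rw [Finset.filter_erase]
  by_cases h : a ≤ r
  · rw [if_pos h, Finset.card_erase_of_mem (by simp only [Finset.mem_filter]; exact ⟨ha, h⟩)]
  · rw [if_neg h, Finset.erase_eq_of_notMem (by simp only [Finset.mem_filter]; exact fun hc => h hc.2)]

lemma encode_surj {n : ℕ} : ∀ (k : ℕ) (I J : Finset ℕ), I.card ≤ k → (I, J) ∈ cP n →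
    ∃ A ∈ cA n, lefts A = I ∧ rights A = J := by
  intro k
  induction k with
  | zero =>
    intro I J hk hIJ
    obtain ⟨_, hcard, _⟩ := mem_cP.mp hIJ
    dsimp only at hcard
    have hI : I = ∅ := Finset.card_eq_zero.mp (Nat.le_zero.mp hk)
    have hJ : J = ∅ := Finset.card_eq_zero.mp (by omega)
    subst hI; subst hJ
    exact ⟨∅, mem_cA.mpr ⟨by intro x hx; simp at hx, by intro x hx; simp at hx⟩,
      by simp [lefts], by simp [rights]⟩
  | succ k ih =>
    intro I J hk hIJ
    obtain ⟨⟨hIs, hJs⟩, hcard, hdom⟩ := mem_cP.mp hIJ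
    dsimp only at hIs hJs hcard
    have hdom' : ∀ r, pcnt J r ≤ pcnt I r := fun r => hdom r
    by_cases hIe : I = ∅
    · subst hIe
      have hJ : J = ∅ := Finset.card_eq_zero.mp (by simpa using hcard.symm)
      subst hJ
      exact ⟨∅, mem_cA.mpr ⟨by intro x hx; simp at hx, by intro x hx; simp at hx⟩,
        by simp [lefts], by simp [rights]⟩
    · have hIne : I.Nonempty := Finset.nonempty_iff_ne_empty.mpr hIe
      have hJne : J.Nonempty := by
        rw [← Finset.card_pos, ← hcard, Finset.card_pos]; exact hIne
      set a := I.max' hIne with ha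
      set b := J.max' hJne with hb
      have haI : a ∈ I := I.max'_mem hIne
      have hbJ : b ∈ J := J.max'_mem hJne
      have ha1 : 1 ≤ a ∧ a ≤ n := by have := hIs haI; simpa [Finset.mem_Icc] using this
      have hb1 : 1 ≤ b ∧ b ≤ n := by have := hJs hbJ; simpa [Finset.mem_Icc] using this
      have hab : a ≤ b := by
        by_contra hc
        push_neg at hc
        have h1 : pcnt J (a - 1) = J.card := by
          apply pcnt_all
          intro j hj
          have hjb : j ≤ b := J.le_max' j hj
          omega
        have h2 : pcnt I (a - 1) < I.card := by
          have hsub : I.filter (· ≤ a - 1) ⊆ I.erase a := by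
            intro i hi
            obtain ⟨hiI, hir⟩ := Finset.mem_filter.mp hi
            exact Finset.mem_erase.mpr ⟨by omega, hiI⟩
          calc pcnt I (a-1) ≤ (I.erase a).card := Finset.card_le_card hsub
            _ < I.card := by
              rw [Finset.card_erase_of_mem haI]
              have := Finset.card_pos.mpr hIne
              omega
        have := hdom' (a - 1)
        omega
      have hmemP : (I.erase a, J.erase b) ∈ cP n := by
        refine mem_cP.mpr ⟨⟨?_, ?_⟩, ?_, ?_⟩
        · exact (Finset.erase_subset _ _).trans hIs
        · exact (Finset.erase_subset _ _).trans hJs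
        · show (I.erase a).card = (J.erase b).card
          rw [Finset.card_erase_of_mem haI, Finset.card_erase_of_mem hbJ, hcard]
        · intro r
          show pcnt (J.erase b) r ≤ pcnt (I.erase a) r
          rw [pcnt_erase haI, pcnt_erase hbJ]
          by_cases hra : a ≤ r
          · have h3 : pcnt I r = I.card :=
              pcnt_all (fun i hi => by have := I.le_max' i hi; omega)
            have h4 : pcnt J r ≤ J.card := pcnt_le_card _ _
            have hIpos : 1 ≤ I.card := Finset.card_pos.mpr hIne
            split_ifs with hrb
            · have := hdom' r; omega
            · -- b > r but a ≤ r ≤ b; pcnt J r counts elements < b only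
              have hsub : J.filter (· ≤ r) ⊆ J.erase b := by
                intro j hj
                obtain ⟨hjJ, hjr⟩ := Finset.mem_filter.mp hj
                exact Finset.mem_erase.mpr ⟨by omega, hjJ⟩
              have : pcnt J r ≤ J.card - 1 := by
                have := Finset.card_le_card hsub
                rw [Finset.card_erase_of_mem hbJ] at this
                exact this
              omega
          · split_ifs with hrb2
            · have := hdom' r; omega
            · exact hdom' r
      obtain ⟨A', hA', hl', hr'⟩ := ih (I.erase a) (J.erase b)
        (by rw [Finset.card_erase_of_mem haI]; omega) hmemP
      have hxlt : ∀ y ∈ A', y.1 < a ∧ y.2 < b := by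
        intro y hy
        have h1 : y.1 ∈ I.erase a := by rw [← hl']; exact Finset.mem_image_of_mem _ hy
        have h2 : y.2 ∈ J.erase b := by rw [← hr']; exact Finset.mem_image_of_mem _ hy
        obtain ⟨h1a, h1b⟩ := Finset.mem_erase.mp h1
        obtain ⟨h2a, h2b⟩ := Finset.mem_erase.mp h2
        have := I.le_max' _ h1b
        have := J.le_max' _ h2b
        omega
      have hnotin : (a, b) ∉ A' := by
        intro h
        have := (hxlt _ h).1
        simp at this
      refine ⟨insert (a, b) A', ?_, ?_, ?_⟩
      · refine mem_cA.mpr ⟨?_, ?_⟩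
        · intro x hx y hy hne
          rcases Finset.mem_insert.mp hx with hx' | hx' <;>
            rcases Finset.mem_insert.mp hy with hy' | hy'
          · exact absurd (hx'.trans hy'.symm) hne
          · subst hx'
            have := hxlt y hy'
            intro ⟨_, h2⟩
            omega
          · subst hy'
            have := hxlt x hx'
            intro ⟨h1, _⟩
            omega
          · exact (mem_cA.mp hA').1 x hx' y hy' hne
        · intro x hx
          rcases Finset.mem_insert.mp hx with hx' | hx'
          · subst hx'
            exact ⟨ha1.1, hab, hb1.2⟩
          · exact (mem_cA.mp hA').2 x hx'
      · rw [lefts, Finset.image_insert, ← lefts, hl']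
        exact Finset.insert_erase haI
      · rw [rights, Finset.image_insert, ← rights, hr']
        exact Finset.insert_erase hbJ

/-- transfer a sum over conditioned antichains to a sum over conditioned endpoint pairs -/
lemma sum_encode {n : ℕ} (C : Finset (ℕ × ℕ) → Prop) (C' : Finset ℕ × Finset ℕ → Prop)
    (hC : ∀ A ∈ cA n, (C A ↔ C' (lefts A, rights A))) :
    ∑ A ∈ (cA n).filter C, (X : Polynomial ℚ) ^ A.card
      = ∑ IJ ∈ (cP n).filter C', X ^ IJ.1.card := by
  refine Finset.sum_bij (fun A _ => (lefts A, rights A)) ?_ ?_ ?_ ?_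
  · intro A hA
    obtain ⟨hA1, hA2⟩ := Finset.mem_filter.mp hA
    exact Finset.mem_filter.mpr ⟨encode_mem hA1, (hC A hA1).mp hA2⟩
  · intro A1 h1 A2 h2 heq
    obtain ⟨hA1, _⟩ := Finset.mem_filter.mp h1
    obtain ⟨hA2, _⟩ := Finset.mem_filter.mp h2
    have heq1 : lefts A1 = lefts A2 := congrArg Prod.fst heq
    have heq2 : rights A1 = rights A2 := congrArg Prod.snd heq
    exact encode_inj A1.card le_rfl hA1 hA2 heq1 heq2
  · intro IJ hIJ
    obtain ⟨hIJ1, hIJ2⟩ := Finset.mem_filter.mp hIJ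
    obtain ⟨A, hA, hl, hr⟩ := encode_surj IJ.1.card IJ.1 IJ.2 le_rfl (by
      rcases IJ with ⟨I, J⟩; exact hIJ1)
    refine ⟨A, Finset.mem_filter.mpr ⟨hA, ?_⟩, ?_⟩
    · rw [hC A hA, hl, hr]
      exact hIJ2
    · exact Prod.ext hl hr
  · intro A hA
    obtain ⟨hA1, _⟩ := Finset.mem_filter.mp hA
    rw [card_lefts (mem_cA.mp hA1).1]

def Conn (p : ℕ) (A : Finset (ℕ × ℕ)) : Prop :=
  ∀ r, 1 ≤ r → r < p → ∃ x ∈ A, x.1 ≤ r ∧ r + 1 ≤ x.2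

noncomputable def mS (n : ℕ) : Polynomial ℚ := ∑ A ∈ cA n, X ^ A.card
noncomputable def cK (p : ℕ) : Finset (Finset (ℕ × ℕ)) := (cA p).filter (Conn p)
noncomputable def kS (p : ℕ) : Polynomial ℚ := ∑ A ∈ cK p, X ^ A.card

lemma pcnt_pred {S : Finset ℕ} {p : ℕ} (hp : 1 ≤ p) :
    pcnt S p = pcnt S (p - 1) + (if p ∈ S then 1 else 0) := by
  have hsplit : S.filter (· ≤ p) = (S.filter (· ≤ p - 1)) ∪ (S.filter (· = p)) := by
    ext s
    simp only [Finset.mem_union, Finset.mem_filter]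
    constructor
    · intro ⟨hs, h2⟩
      by_cases hc : s = p
      · exact Or.inr ⟨hs, hc⟩
      · exact Or.inl ⟨hs, by omega⟩
    · rintro (⟨hs, h2⟩ | ⟨hs, h2⟩) <;> exact ⟨hs, by omega⟩
  have hdisj : Disjoint (S.filter (· ≤ p - 1)) (S.filter (· = p)) := by
    rw [Finset.disjoint_left]
    intro s hs hs'
    simp only [Finset.mem_filter] at hs hs'
    omega
  have hcard1 : (S.filter (· = p)).card = if p ∈ S then 1 else 0 := by
    rw [Finset.filter_eq' S p]
    split_ifs <;> simp
  rw [pcnt, hsplit, Finset.card_union_of_disjoint hdisj, ← pcnt, hcard1]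

lemma pcnt_insert {S : Finset ℕ} {a : ℕ} (ha : a ∉ S) (r : ℕ) :
    pcnt (insert a S) r = pcnt S r + if a ≤ r then 1 else 0 := by
  rw [pcnt, Finset.filter_insert]
  split_ifs with h
  · rw [Finset.card_insert_of_notMem (fun hc => ha (Finset.mem_filter.mp hc).1), pcnt]
  · rw [pcnt]
    omega

lemma pcnt_shift_down {S : Finset ℕ} (h2 : ∀ s ∈ S, 2 ≤ s) (r : ℕ) :
    pcnt (S.image (· - 1)) r = pcnt S (r + 1) := by
  rw [pcnt, Finset.filter_image]
  rw [show (S.filter (fun a => a - 1 ≤ r)) = S.filter (· ≤ r + 1) from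
    Finset.filter_congr (fun s hs => by have := h2 s hs; constructor <;> (intro; omega))]
  rw [pcnt]
  apply Finset.card_image_of_injOn
  intro x hx y hy hxy
  have := h2 x (Finset.mem_filter.mp hx).1
  have := h2 y (Finset.mem_filter.mp hy).1
  try dsimp only at hxy
  omega

lemma pcnt_shift_up (S : Finset ℕ) (r : ℕ) :
    pcnt (S.image (· + 1)) (r + 1) = pcnt S r := by
  rw [pcnt, Finset.filter_image]
  rw [show (S.filter (fun a => a + 1 ≤ r + 1)) = S.filter (· ≤ r) from
    Finset.filter_congr (fun s _ => by constructor <;> (intro; omega))]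
  rw [pcnt]
  apply Finset.card_image_of_injOn
  intro x _ y _ hxy
  try dsimp only at hxy
  omega

lemma pcnt_zero {S : Finset ℕ} (h : ∀ s ∈ S, 1 ≤ s) : pcnt S 0 = 0 := by
  rw [pcnt, Finset.card_eq_zero]
  apply Finset.filter_false_of_mem
  intro s hs
  have := h s hs
  omega

lemma card_image_down {S : Finset ℕ} (h2 : ∀ s ∈ S, 1 ≤ s) :
    (S.image (· - 1)).card = S.card := by
  apply Finset.card_image_of_injOn
  intro x hx y hy hxy
  have := h2 x hx
  have := h2 y hy
  try dsimp only at hxy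
  omega

lemma card_image_up (S : Finset ℕ) : (S.image (· + 1)).card = S.card := by
  apply Finset.card_image_of_injOn
  intro x _ y _ hxy
  try dsimp only at hxy
  omega

lemma updown {S : Finset ℕ} (h : ∀ s ∈ S, 1 ≤ s) :
    (S.image (· - 1)).image (· + 1) = S := by
  rw [Finset.image_image]
  ext t
  simp only [Finset.mem_image, Function.comp]
  constructor
  · rintro ⟨s, hs, hst⟩
    have := h s hs
    have : s = t := by omega
    subst this; exact hs
  · intro ht
    exact ⟨t, ht, by have := h t ht; omega⟩

lemma downup (S : Finset ℕ) : (S.image (· + 1)).image (· - 1) = S := by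
  rw [Finset.image_image]
  ext t
  simp only [Finset.mem_image, Function.comp]
  constructor
  · rintro ⟨s, hs, hst⟩
    have : s = t := by omega
    subst this; exact hs
  · intro ht
    exact ⟨t, ht, by omega⟩

def Strict (p : ℕ) (IJ : Finset ℕ × Finset ℕ) : Prop :=
  ∀ r, 1 ≤ r → r < p → pcnt IJ.2 r < pcnt IJ.1 r

/-- strict-domination pairs: encodings of connected antichains on `[1,p]` -/
noncomputable def cPc (p : ℕ) : Finset (Finset ℕ × Finset ℕ) :=
  (cP p).filter (Strict p)

lemma kS_eq_pairs (p : ℕ) :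
    kS p = ∑ IJ ∈ cPc p, (X : Polynomial ℚ) ^ IJ.1.card := by
  rw [kS, cK, cPc]
  have h := sum_encode (n := p) (Conn p) (Strict p) ?_
  · exact h
  intro A hA
  unfold Strict
  constructor
  · intro hconn r h1 h2
    obtain ⟨x, hx, hx1, hx2⟩ := hconn r h1 h2
    have hne : 0 < (crossF A r).card := by
      apply Finset.card_pos.mpr
      exact ⟨x, Finset.mem_filter.mpr ⟨hx, hx1, hx2⟩⟩
    have := cross_card hA r
    dsimp only
    omega
  · intro hs r h1 h2
    have h3 := hs r h1 h2
    try dsimp only at h3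
    have hc := cross_card hA r
    have hpos : 0 < (crossF A r).card := by omega
    obtain ⟨x, hx⟩ := Finset.card_pos.mp hpos
    obtain ⟨hxA, hx1, hx2⟩ := Finset.mem_filter.mp hx
    exact ⟨x, hxA, hx1, hx2⟩

lemma mS_eq_pairs (n : ℕ) :
    mS n = ∑ IJ ∈ cP n, (X : Polynomial ℚ) ^ IJ.1.card := by
  have h := sum_encode (n := n) (fun _ => True) (fun _ => True) (fun A _ => by simp)
  simp only [Finset.filter_true] at h
  exact h

lemma cPc_facts {p : ℕ} (hp : 2 ≤ p) {I J : Finset ℕ} (hIJ : (I, J) ∈ cPc p) :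
    (1 ∈ I ∧ 1 ∉ J) ∧ (p ∈ J ∧ p ∉ I) := by
  obtain ⟨hP, hstr'⟩ := Finset.mem_filter.mp hIJ
  have hstr : ∀ r, 1 ≤ r → r < p → pcnt J r < pcnt I r := hstr'
  obtain ⟨⟨hIs, hJs⟩, hcard, hdom⟩ := mem_cP.mp hP
  try dsimp only at hIs hJs hcard
  have hIle : ∀ i ∈ I, 1 ≤ i ∧ i ≤ p := fun i hi => by
    have := hIs hi; simp only [Finset.mem_Icc] at this; omega
  have hJle : ∀ j ∈ J, 1 ≤ j ∧ j ≤ p := fun j hj => by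
    have := hJs hj; simp only [Finset.mem_Icc] at this; omega
  constructor
  · have hs1 := hstr 1 le_rfl (by omega)
    have hI1 : pcnt I 1 ≤ 1 := by
      rw [pcnt]
      calc (I.filter (· ≤ 1)).card ≤ ({1} : Finset ℕ).card := by
            apply Finset.card_le_card
            intro i hi
            obtain ⟨hiI, hile⟩ := Finset.mem_filter.mp hi
            have := hIle i hiI
            simp only [Finset.mem_singleton]
            omega
        _ = 1 := by simp
    have hJ0 : pcnt J 1 = 0 := by omega
    have hI1' : pcnt I 1 = 1 := by omega
    constructor
    · have hne : (I.filter (· ≤ 1)).Nonempty := by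
        rw [← Finset.card_pos, ← pcnt]; omega
      obtain ⟨i, hi⟩ := hne
      obtain ⟨hiI, hile⟩ := Finset.mem_filter.mp hi
      have := hIle i hiI
      have : i = 1 := by omega
      subst this; exact hiI
    · intro h1J
      have h2 : 1 ∈ J.filter (· ≤ 1) := Finset.mem_filter.mpr ⟨h1J, le_rfl⟩
      have h3 := Finset.card_pos.mpr ⟨1, h2⟩
      rw [← pcnt] at h3
      omega
  · have hIp : pcnt I p = I.card := pcnt_all (fun i hi => (hIle i hi).2)
    have hJp : pcnt J p = J.card := pcnt_all (fun j hj => (hJle j hj).2)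
    have hIpp := pcnt_pred (S := I) (p := p) (by omega)
    have hJpp := pcnt_pred (S := J) (p := p) (by omega)
    have hs := hstr (p - 1) (by omega) (by omega)
    constructor
    · by_contra hc
      rw [if_neg hc] at hJpp
      split_ifs at hIpp <;> omega
    · intro hc
      rw [if_pos hc] at hIpp
      split_ifs at hJpp <;> omega

/-- the crucial rematching bijection, at the level of endpoint pairs -/
lemma kS_eq (p : ℕ) (hp : 2 ≤ p) : kS p = X * mS (p - 2) := by
  rw [kS_eq_pairs, mS_eq_pairs, Finset.mul_sum]
  refine Finset.sum_nbij' (fun IJ => ((IJ.1.erase 1).image (· - 1), (IJ.2.erase p).image (· - 1)))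
    (fun IJ => (insert 1 (IJ.1.image (· + 1)), insert p (IJ.2.image (· + 1)))) ?_ ?_ ?_ ?_ ?_
  · -- forward well-defined
    rintro ⟨I, J⟩ hIJ
    obtain ⟨⟨h1I, h1J⟩, hpJ, hpI⟩ := cPc_facts hp hIJ
    obtain ⟨hP, hstr'⟩ := Finset.mem_filter.mp hIJ
    have hstr : ∀ r, 1 ≤ r → r < p → pcnt J r < pcnt I r := hstr'
    obtain ⟨⟨hIs, hJs⟩, hcard, hdom⟩ := mem_cP.mp hP
    try dsimp only at hIs hJs hcard ⊢
    have hIle : ∀ i ∈ I, 1 ≤ i ∧ i ≤ p := fun i hi => by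
      have := hIs hi; simp only [Finset.mem_Icc] at this; omega
    have hJle : ∀ j ∈ J, 1 ≤ j ∧ j ≤ p := fun j hj => by
      have := hJs hj; simp only [Finset.mem_Icc] at this; omega
    have hI2 : ∀ i ∈ I.erase 1, 2 ≤ i := by
      intro i hi
      obtain ⟨hne, hiI⟩ := Finset.mem_erase.mp hi
      have := hIle i hiI; omega
    have hJ2 : ∀ j ∈ J.erase p, 2 ≤ j := by
      intro j hj
      obtain ⟨hne, hjJ⟩ := Finset.mem_erase.mp hj
      have := hJle j hjJ
      rcases this with ⟨h1, h2⟩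
      rcases Nat.lt_or_ge j 2 with hc | hc
      · have : j = 1 := by omega
        subst this
        exact absurd hjJ h1J
      · exact hc
    refine mem_cP.mpr ⟨⟨?_, ?_⟩, ?_, ?_⟩
    · intro i hi
      obtain ⟨i', hi', rfl⟩ := Finset.mem_image.mp hi
      obtain ⟨hne, hiI⟩ := Finset.mem_erase.mp hi'
      have := hIle i' hiI
      have hip : i' ≠ p := fun h => hpI (h ▸ hiI)
      simp only [Finset.mem_Icc]
      omega
    · intro j hj
      obtain ⟨j', hj', rfl⟩ := Finset.mem_image.mp hj
      have h2 := hJ2 j' hj'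
      obtain ⟨hne, hjJ⟩ := Finset.mem_erase.mp hj'
      have := hJle j' hjJ
      simp only [Finset.mem_Icc]
      omega
    · show ((I.erase 1).image _).card = ((J.erase p).image _).card
      rw [card_image_down (fun s hs => by have := hI2 s hs; omega),
        card_image_down (fun s hs => by have := hJ2 s hs; omega),
        Finset.card_erase_of_mem h1I, Finset.card_erase_of_mem hpJ, hcard]
    · intro r
      show pcnt ((J.erase p).image (· - 1)) r ≤ pcnt ((I.erase 1).image (· - 1)) r
      rw [pcnt_shift_down hJ2, pcnt_shift_down hI2,
        pcnt_erase h1I, pcnt_erase hpJ, if_pos (by omega : (1:ℕ) ≤ r + 1)]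
      by_cases hc : r + 1 < p
      · have := hstr (r + 1) (by omega) hc
        split_ifs with h <;> omega
      · have hIp : pcnt I (r + 1) = I.card := pcnt_all (fun i hi => by have := hIle i hi; omega)
        have hJp : pcnt J (r + 1) = J.card := pcnt_all (fun j hj => by have := hJle j hj; omega)
        have hc1 : 1 ∈ I.filter (· ≤ 1) := Finset.mem_filter.mpr ⟨h1I, le_rfl⟩
        have hIpos : 1 ≤ I.card := Finset.card_pos.mpr ⟨1, h1I⟩
        split_ifs with h <;> omega
  · -- backward well-defined
    rintro ⟨I, J⟩ hIJ
    obtain ⟨⟨hIs, hJs⟩, hcard, hdom'⟩ := mem_cP.mp hIJ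
    have hdom : ∀ r, pcnt J r ≤ pcnt I r := hdom'
    try dsimp only at hIs hJs hcard ⊢
    have hIle : ∀ i ∈ I, 1 ≤ i ∧ i ≤ p - 2 := fun i hi => by
      have := hIs hi; simp only [Finset.mem_Icc] at this; omega
    have hJle : ∀ j ∈ J, 1 ≤ j ∧ j ≤ p - 2 := fun j hj => by
      have := hJs hj; simp only [Finset.mem_Icc] at this; omega
    have h1nI : (1 : ℕ) ∉ I.image (· + 1) := by
      intro h
      obtain ⟨i, hi, hii⟩ := Finset.mem_image.mp h
      have := hIle i hi
      try dsimp only at hii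
      omega
    have hpnJ : p ∉ J.image (· + 1) := by
      intro h
      obtain ⟨j, hj, hjj⟩ := Finset.mem_image.mp h
      have := hJle j hj
      try dsimp only at hjj
      omega
    refine Finset.mem_filter.mpr ⟨mem_cP.mpr ⟨⟨?_, ?_⟩, ?_, ?_⟩, ?_⟩
    · intro i hi
      rcases Finset.mem_insert.mp hi with h | h
      · subst h; simp only [Finset.mem_Icc]; omega
      · obtain ⟨i', hi', rfl⟩ := Finset.mem_image.mp h
        have := hIle i' hi'
        simp only [Finset.mem_Icc]
        omega
    · intro j hj
      rcases Finset.mem_insert.mp hj with h | h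
      · subst h; simp only [Finset.mem_Icc]; omega
      · obtain ⟨j', hj', rfl⟩ := Finset.mem_image.mp h
        have := hJle j' hj'
        simp only [Finset.mem_Icc]
        omega
    · show (insert 1 (I.image _)).card = (insert p (J.image _)).card
      rw [Finset.card_insert_of_notMem h1nI, Finset.card_insert_of_notMem hpnJ,
        card_image_up, card_image_up, hcard]
    · intro r
      show pcnt (insert p (J.image (· + 1))) r ≤ pcnt (insert 1 (I.image (· + 1))) r
      rw [pcnt_insert h1nI, pcnt_insert hpnJ]
      rcases Nat.eq_zero_or_pos r with h0 | hrpos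
      · subst h0
        have hz1 : pcnt (I.image (· + 1)) 0 = 0 :=
          pcnt_zero (fun s hs => by
            obtain ⟨i, hi, rfl⟩ := Finset.mem_image.mp hs; omega)
        have hz2 : pcnt (J.image (· + 1)) 0 = 0 :=
          pcnt_zero (fun s hs => by
            obtain ⟨j, hj, rfl⟩ := Finset.mem_image.mp hs; omega)
        split_ifs <;> omega
      · obtain ⟨r', rfl⟩ : ∃ r', r = r' + 1 := ⟨r - 1, by omega⟩
        rw [pcnt_shift_up, pcnt_shift_up]
        have hd := hdom r'
        by_cases hc : p ≤ r' + 1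
        · have hIr : pcnt I r' = I.card := pcnt_all (fun i hi => by have := hIle i hi; omega)
          have hJr : pcnt J r' = J.card := pcnt_all (fun j hj => by have := hJle j hj; omega)
          split_ifs <;> omega
        · split_ifs <;> omega
    · intro r h1r hrp
      show pcnt (insert p (J.image (· + 1))) r < pcnt (insert 1 (I.image (· + 1))) r
      rw [pcnt_insert h1nI, pcnt_insert hpnJ, if_pos h1r, if_neg (by omega)]
      obtain ⟨r', rfl⟩ : ∃ r', r = r' + 1 := ⟨r - 1, by omega⟩
      rw [pcnt_shift_up, pcnt_shift_up]
      have := hdom r'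
      omega
  · -- left inverse
    rintro ⟨I, J⟩ hIJ
    obtain ⟨⟨h1I, h1J⟩, hpJ, hpI⟩ := cPc_facts hp hIJ
    obtain ⟨hP, _⟩ := Finset.mem_filter.mp hIJ
    obtain ⟨⟨hIs, hJs⟩, _, _⟩ := mem_cP.mp hP
    try dsimp only at hIs hJs
    have e1 : ((I.erase 1).image (· - 1)).image (· + 1) = I.erase 1 :=
      updown (fun s hs => by
        have := hIs (Finset.mem_erase.mp hs).2
        simp only [Finset.mem_Icc] at this
        omega)
    have e2 : ((J.erase p).image (· - 1)).image (· + 1) = J.erase p :=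
      updown (fun s hs => by
        have := hJs (Finset.mem_erase.mp hs).2
        simp only [Finset.mem_Icc] at this
        omega)
    show (insert 1 _, insert p _) = (I, J)
    rw [e1, e2, Finset.insert_erase h1I, Finset.insert_erase hpJ]
  · -- right inverse
    rintro ⟨I, J⟩ hIJ
    obtain ⟨⟨hIs, hJs⟩, _, _⟩ := mem_cP.mp hIJ
    try dsimp only at hIs hJs
    have h1nI : (1 : ℕ) ∉ I.image (· + 1) := by
      intro h
      obtain ⟨i, hi, hii⟩ := Finset.mem_image.mp h
      have := hIs hi
      simp only [Finset.mem_Icc] at this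
      try dsimp only at hii
      omega
    have hpnJ : p ∉ J.image (· + 1) := by
      intro h
      obtain ⟨j, hj, hjj⟩ := Finset.mem_image.mp h
      have := hJs hj
      simp only [Finset.mem_Icc] at this
      try dsimp only at hjj
      omega
    show (((insert 1 (I.image (· + 1))).erase 1).image (· - 1),
      ((insert p (J.image (· + 1))).erase p).image (· - 1)) = (I, J)
    rw [Finset.erase_insert h1nI, Finset.erase_insert hpnJ, downup, downup]
  · -- weights
    rintro ⟨I, J⟩ hIJ
    obtain ⟨⟨h1I, h1J⟩, hpJ, hpI⟩ := cPc_facts hp hIJ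
    obtain ⟨hP, _⟩ := Finset.mem_filter.mp hIJ
    obtain ⟨⟨hIs, hJs⟩, _, _⟩ := mem_cP.mp hP
    try dsimp only at hIs hJs ⊢
    have hIpos : 1 ≤ I.card := Finset.card_pos.mpr ⟨1, h1I⟩
    rw [card_image_down (fun s hs => by
      have := hIs (Finset.mem_erase.mp hs).2
      simp only [Finset.mem_Icc] at this
      omega)]
    rw [Finset.card_erase_of_mem h1I]
    conv_lhs => rw [show I.card = (I.card - 1) + 1 by omega]
    rw [pow_succ]
    ring

def NS (A : Finset (ℕ × ℕ)) : Prop := ∀ x ∈ A, x.1 ≠ x.2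
def FS (n : ℕ) (A : Finset (ℕ × ℕ)) : Prop := ∀ r, 1 ≤ r → r ≤ n → ∃ x ∈ A, x.1 ≤ r ∧ r ≤ x.2

noncomputable def cD (n : ℕ) : Finset (Finset (ℕ × ℕ)) :=
  (cA n).filter (fun A => NS A ∧ FS n A)
noncomputable def dS (n : ℕ) : Polynomial ℚ := ∑ A ∈ cD n, X ^ A.card

/-- the first return position of an antichain -/
noncomputable def fr (A : Finset (ℕ × ℕ)) : ℕ :=
  sInf {q | 1 ≤ q ∧ ∀ x ∈ A, ¬(x.1 ≤ q ∧ q + 1 ≤ x.2)}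

lemma fr_spec {n : ℕ} {A : Finset (ℕ × ℕ)} (hn : 1 ≤ n) (hA : A ∈ cA n) :
    (1 ≤ fr A ∧ ∀ x ∈ A, ¬(x.1 ≤ fr A ∧ fr A + 1 ≤ x.2)) ∧ fr A ≤ n := by
  have hBnd := (mem_cA.mp hA).2
  set S := {q | 1 ≤ q ∧ ∀ x ∈ A, ¬(x.1 ≤ q ∧ q + 1 ≤ x.2)} with hS
  have hmem : n ∈ S := by
    refine ⟨hn, fun x hx => ?_⟩
    have := hBnd x hx
    omega
  have hfr : fr A ∈ S := by
    unfold fr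
    rw [← hS]
    exact Nat.sInf_mem ⟨n, hmem⟩
  have hle : fr A ≤ n := by
    unfold fr
    rw [← hS]
    exact Nat.sInf_le hmem
  exact ⟨hfr, hle⟩

lemma fr_min {A : Finset (ℕ × ℕ)} {r : ℕ} (h1 : 1 ≤ r) (h2 : r < fr A) :
    ∃ x ∈ A, x.1 ≤ r ∧ r + 1 ≤ x.2 := by
  set S := {q | 1 ≤ q ∧ ∀ x ∈ A, ¬(x.1 ≤ q ∧ q + 1 ≤ x.2)} with hS
  have h2' : r < sInf S := by
    rw [hS]
    exact h2
  have h := Nat.notMem_of_lt_sInf h2'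
  rw [hS] at h
  simp only [Set.mem_setOf_eq] at h
  push_neg at h
  obtain ⟨x, hx, hx2⟩ := h h1
  exact ⟨x, hx, hx2⟩

lemma fr_eq {A : Finset (ℕ × ℕ)} {p : ℕ}
    (hmem : 1 ≤ p ∧ ∀ x ∈ A, ¬(x.1 ≤ p ∧ p + 1 ≤ x.2))
    (hmin : ∀ r, 1 ≤ r → r < p → ∃ x ∈ A, x.1 ≤ r ∧ r + 1 ≤ x.2) : fr A = p := by
  set S := {q | 1 ≤ q ∧ ∀ x ∈ A, ¬(x.1 ≤ q ∧ q + 1 ≤ x.2)} with hS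
  have hmem' : p ∈ S := hmem
  have h1 : fr A ≤ p := by
    unfold fr; rw [← hS]; exact Nat.sInf_le hmem'
  have hfr : fr A ∈ S := by
    unfold fr; rw [← hS]; exact Nat.sInf_mem ⟨p, hmem'⟩
  rcases Nat.lt_or_ge (fr A) p with hc | hc
  · exfalso
    obtain ⟨hge1, hnone⟩ := hfr
    obtain ⟨x, hx, hx1, hx2⟩ := hmin (fr A) hge1 hc
    exact hnone x hx ⟨hx1, hx2⟩
  · omega

noncomputable def shUp (p : ℕ) (S : Finset (ℕ × ℕ)) : Finset (ℕ × ℕ) :=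
  S.image (fun x => (x.1 + p, x.2 + p))
noncomputable def shDn (p : ℕ) (S : Finset (ℕ × ℕ)) : Finset (ℕ × ℕ) :=
  S.image (fun x => (x.1 - p, x.2 - p))

lemma mem_shUp {p : ℕ} {S : Finset (ℕ × ℕ)} {y : ℕ × ℕ} :
    y ∈ shUp p S ↔ ∃ x ∈ S, x.1 + p = y.1 ∧ x.2 + p = y.2 := by
  simp only [shUp, Finset.mem_image, Prod.ext_iff]

lemma mem_shDn {p : ℕ} {S : Finset (ℕ × ℕ)} {y : ℕ × ℕ} :
    y ∈ shDn p S ↔ ∃ x ∈ S, x.1 - p = y.1 ∧ x.2 - p = y.2 := by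
  simp only [shDn, Finset.mem_image, Prod.ext_iff]

lemma shUp_card (p : ℕ) (S : Finset (ℕ × ℕ)) : (shUp p S).card = S.card := by
  apply Finset.card_image_of_injOn
  intro x _ y _ hxy
  obtain ⟨h1, h2⟩ := Prod.ext_iff.mp hxy
  dsimp only at h1 h2
  exact Prod.ext (by omega) (by omega)

lemma shDn_card {p : ℕ} {S : Finset (ℕ × ℕ)} (h : ∀ x ∈ S, p + 1 ≤ x.1 ∧ p + 1 ≤ x.2) :
    (shDn p S).card = S.card := by
  apply Finset.card_image_of_injOn
  intro x hx y hy hxy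
  obtain ⟨h1, h2⟩ := Prod.ext_iff.mp hxy
  have := h x hx
  have := h y hy
  dsimp only at h1 h2
  exact Prod.ext (by omega) (by omega)

lemma shDn_shUp (p : ℕ) (S : Finset (ℕ × ℕ)) : shDn p (shUp p S) = S := by
  ext y
  rw [mem_shDn]
  constructor
  · rintro ⟨x, hx, h1, h2⟩
    obtain ⟨z, hz, hz1, hz2⟩ := mem_shUp.mp hx
    have : z = y := Prod.ext (by omega) (by omega)
    subst this; exact hz
  · intro hy
    exact ⟨(y.1 + p, y.2 + p), mem_shUp.mpr ⟨y, hy, rfl, rfl⟩, by dsimp only; omega,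
      by dsimp only; omega⟩

lemma shUp_shDn {p : ℕ} {S : Finset (ℕ × ℕ)} (h : ∀ x ∈ S, p + 1 ≤ x.1 ∧ p + 1 ≤ x.2) :
    shUp p (shDn p S) = S := by
  ext y
  rw [mem_shUp]
  constructor
  · rintro ⟨x, hx, h1, h2⟩
    obtain ⟨z, hz, hz1, hz2⟩ := mem_shDn.mp hx
    have := h z hz
    have : z = y := Prod.ext (by omega) (by omega)
    subst this; exact hz
  · intro hy
    have := h y hy
    exact ⟨(y.1 - p, y.2 - p), mem_shDn.mpr ⟨y, hy, rfl, rfl⟩, by dsimp only; omega,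
      by dsimp only; omega⟩

/-- the two halves of an antichain with first return `p` -/
noncomputable def low (p : ℕ) (A : Finset (ℕ × ℕ)) : Finset (ℕ × ℕ) :=
  A.filter (fun x => x.2 ≤ p)
noncomputable def high (p : ℕ) (A : Finset (ℕ × ℕ)) : Finset (ℕ × ℕ) :=
  shDn p (A.filter (fun x => ¬ x.2 ≤ p))

lemma low_mem_cK {n p : ℕ} {A : Finset (ℕ × ℕ)} (hn : 1 ≤ n) (hA : A ∈ cA n)
    (hfr : fr A = p) : low p A ∈ cK p := by
  obtain ⟨hAC, hBnd⟩ := mem_cA.mp hA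
  obtain ⟨⟨hp1, hnocross⟩, hpn⟩ := fr_spec hn hA
  rw [hfr] at hp1 hnocross hpn
  refine Finset.mem_filter.mpr ⟨mem_cA.mpr ⟨?_, ?_⟩, ?_⟩
  · intro x hx y hy hne
    exact hAC x (Finset.mem_filter.mp hx).1 y (Finset.mem_filter.mp hy).1 hne
  · intro x hx
    obtain ⟨hxA, hx2⟩ := Finset.mem_filter.mp hx
    have := hBnd x hxA
    omega
  · intro r h1 h2
    obtain ⟨x, hx, hx1, hx2⟩ := fr_min (A := A) h1 (by omega)
    have hx2p : x.2 ≤ p := by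
      by_contra hc
      exact hnocross x hx ⟨by omega, by omega⟩
    exact ⟨x, Finset.mem_filter.mpr ⟨hx, hx2p⟩, hx1, hx2⟩

lemma high_mem_cA {n p : ℕ} {A : Finset (ℕ × ℕ)} (hn : 1 ≤ n) (hA : A ∈ cA n)
    (hfr : fr A = p) : high p A ∈ cA (n - p) := by
  obtain ⟨hAC, hBnd⟩ := mem_cA.mp hA
  obtain ⟨⟨hp1, hnocross⟩, hpn⟩ := fr_spec hn hA
  rw [hfr] at hp1 hnocross hpn
  have hpre : ∀ x ∈ A.filter (fun x => ¬ x.2 ≤ p), p + 1 ≤ x.1 ∧ p + 1 ≤ x.2 := by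
    intro x hx
    obtain ⟨hxA, hx2⟩ := Finset.mem_filter.mp hx
    have := hnocross x hxA
    omega
  refine mem_cA.mpr ⟨?_, ?_⟩
  · intro x hx y hy hne
    obtain ⟨x', hx', hx1, hx2⟩ := mem_shDn.mp hx
    obtain ⟨y', hy', hy1, hy2⟩ := mem_shDn.mp hy
    have hpx := hpre x' hx'
    have hpy := hpre y' hy'
    have hxe : x = (x'.1 - p, x'.2 - p) := Prod.ext hx1.symm hx2.symm
    have hye : y = (y'.1 - p, y'.2 - p) := Prod.ext hy1.symm hy2.symm
    have hne' : x' ≠ y' := by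
      intro h
      apply hne
      rw [hxe, hye, h]
    have := hAC x' (Finset.mem_filter.mp hx').1 y' (Finset.mem_filter.mp hy').1 hne'
    intro ⟨hc1, hc2⟩
    exact this ⟨by omega, by omega⟩
  · intro x hx
    obtain ⟨x', hx', hx1, hx2⟩ := mem_shDn.mp hx
    have hpx := hpre x' hx'
    have hb := hBnd x' (Finset.mem_filter.mp hx').1
    omega

section Comb
variable {n p : ℕ} {B C : Finset (ℕ × ℕ)}

lemma shUp_fact (hpn : p ≤ n) (hC : C ∈ cA (n - p)) :
    ∀ y ∈ shUp p C, p + 1 ≤ y.1 ∧ y.1 ≤ y.2 ∧ y.2 ≤ n := by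
  intro y hy
  obtain ⟨c, hc, h1, h2⟩ := mem_shUp.mp hy
  have := (mem_cA.mp hC).2 c hc
  omega

lemma comb_cA (hp1 : 1 ≤ p) (hpn : p ≤ n) (hB : B ∈ cK p) (hC : C ∈ cA (n - p)) :
    B ∪ shUp p C ∈ cA n := by
  obtain ⟨hBA, hBconn⟩ := Finset.mem_filter.mp hB
  obtain ⟨hBAC, hBB⟩ := mem_cA.mp hBA
  obtain ⟨hCAC, hCB⟩ := mem_cA.mp hC
  have hup := shUp_fact hpn hC
  refine mem_cA.mpr ⟨?_, ?_⟩
  · intro x hx y hy hne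
    rcases Finset.mem_union.mp hx with hx' | hx' <;>
      rcases Finset.mem_union.mp hy with hy' | hy'
    · exact hBAC x hx' y hy' hne
    · have h1 := hBB x hx'
      have h2 := hup y hy'
      intro ⟨g1, g2⟩
      omega
    · have h1 := hBB y hy'
      have h2 := hup x hx'
      intro ⟨g1, g2⟩
      omega
    · obtain ⟨c, hc, hc1, hc2⟩ := mem_shUp.mp hx'
      obtain ⟨d, hd, hd1, hd2⟩ := mem_shUp.mp hy'
      have hne' : c ≠ d := by
        intro h
        apply hne
        have : x = (c.1 + p, c.2 + p) := Prod.ext hc1.symm hc2.symm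
        have hy2 : y = (d.1 + p, d.2 + p) := Prod.ext hd1.symm hd2.symm
        rw [this, hy2, h]
      have := hCAC c hc d hd hne'
      intro ⟨g1, g2⟩
      exact this ⟨by omega, by omega⟩
  · intro x hx
    rcases Finset.mem_union.mp hx with hx' | hx'
    · have := hBB x hx'
      omega
    · have := hup x hx'
      omega

lemma comb_fr (hp1 : 1 ≤ p) (hpn : p ≤ n) (hB : B ∈ cK p) (hC : C ∈ cA (n - p)) :
    fr (B ∪ shUp p C) = p := by
  obtain ⟨hBA, hBconn⟩ := Finset.mem_filter.mp hB
  obtain ⟨hBAC, hBB⟩ := mem_cA.mp hBA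
  have hup := shUp_fact hpn hC
  apply fr_eq
  · refine ⟨hp1, fun x hx => ?_⟩
    rcases Finset.mem_union.mp hx with hx' | hx'
    · have := hBB x hx'
      omega
    · have := hup x hx'
      omega
  · intro r h1 h2
    obtain ⟨x, hx, hx1, hx2⟩ := hBconn r h1 h2
    exact ⟨x, Finset.mem_union_left _ hx, hx1, hx2⟩

lemma comb_low (hpn : p ≤ n) (hB : B ∈ cK p) (hC : C ∈ cA (n - p)) :
    low p (B ∪ shUp p C) = B := by
  obtain ⟨hBA, hBconn⟩ := Finset.mem_filter.mp hB
  obtain ⟨hBAC, hBB⟩ := mem_cA.mp hBA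
  have hup := shUp_fact hpn hC
  ext x
  simp only [low, Finset.mem_filter, Finset.mem_union]
  constructor
  · rintro ⟨hx | hx, h2⟩
    · exact hx
    · have := hup x hx
      omega
  · intro hx
    have := hBB x hx
    exact ⟨Or.inl hx, by omega⟩

lemma comb_high (hpn : p ≤ n) (hB : B ∈ cK p) (hC : C ∈ cA (n - p)) :
    high p (B ∪ shUp p C) = C := by
  obtain ⟨hBA, hBconn⟩ := Finset.mem_filter.mp hB
  obtain ⟨hBAC, hBB⟩ := mem_cA.mp hBA
  have hup := shUp_fact hpn hC
  have hfilt : (B ∪ shUp p C).filter (fun x => ¬ x.2 ≤ p) = shUp p C := by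
    ext x
    simp only [Finset.mem_filter, Finset.mem_union]
    constructor
    · rintro ⟨hx | hx, h2⟩
      · have := hBB x hx
        omega
      · exact hx
    · intro hx
      have := hup x hx
      exact ⟨Or.inr hx, by omega⟩
  rw [high, hfilt]
  exact shDn_shUp p C

lemma comb_disj (hpn : p ≤ n) (hB : B ∈ cK p) (hC : C ∈ cA (n - p)) :
    Disjoint B (shUp p C) := by
  obtain ⟨hBA, hBconn⟩ := Finset.mem_filter.mp hB
  obtain ⟨hBAC, hBB⟩ := mem_cA.mp hBA
  have hup := shUp_fact hpn hC
  rw [Finset.disjoint_left]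
  intro x hx hx'
  have := hBB x hx
  have := hup x hx'
  omega

end Comb

lemma fiberM {n p : ℕ} (hn : 1 ≤ n) (hp1 : 1 ≤ p) (hpn : p ≤ n) :
    ∑ A ∈ (cA n).filter (fun A => fr A = p), (X : Polynomial ℚ) ^ A.card
      = kS p * mS (n - p) := by
  rw [kS, mS, Finset.sum_mul_sum, ← Finset.sum_product']
  refine Finset.sum_nbij' (fun A => (low p A, high p A))
    (fun BC => BC.1 ∪ shUp p BC.2) ?_ ?_ ?_ ?_ ?_
  · intro A hA
    obtain ⟨hA1, hfr⟩ := Finset.mem_filter.mp hA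
    exact Finset.mem_product.mpr ⟨low_mem_cK hn hA1 hfr, high_mem_cA hn hA1 hfr⟩
  · rintro ⟨B, C⟩ hBC
    obtain ⟨hB, hC⟩ := Finset.mem_product.mp hBC
    exact Finset.mem_filter.mpr ⟨comb_cA hp1 hpn hB hC, comb_fr hp1 hpn hB hC⟩
  · intro A hA
    obtain ⟨hA1, hfr⟩ := Finset.mem_filter.mp hA
    obtain ⟨hAC, hBnd⟩ := mem_cA.mp hA1
    obtain ⟨⟨_, hnocross⟩, _⟩ := fr_spec hn hA1
    rw [hfr] at hnocross
    show low p A ∪ shUp p (high p A) = A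
    rw [high, shUp_shDn (by
      intro x hx
      obtain ⟨hxA, hx2⟩ := Finset.mem_filter.mp hx
      have := hnocross x hxA
      omega)]
    rw [low]
    exact Finset.filter_union_filter_not_eq _ A
  · rintro ⟨B, C⟩ hBC
    obtain ⟨hB, hC⟩ := Finset.mem_product.mp hBC
    show (low p (B ∪ shUp p C), high p (B ∪ shUp p C)) = (B, C)
    rw [comb_low hpn hB hC, comb_high hpn hB hC]
  · intro A hA
    obtain ⟨hA1, hfr⟩ := Finset.mem_filter.mp hA
    obtain ⟨hAC, hBnd⟩ := mem_cA.mp hA1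
    obtain ⟨⟨_, hnocross⟩, _⟩ := fr_spec hn hA1
    rw [hfr] at hnocross
    show (X : Polynomial ℚ) ^ A.card = X ^ (low p A).card * X ^ (high p A).card
    have hcard : (high p A).card = (A.filter (fun x => ¬ x.2 ≤ p)).card := by
      apply shDn_card
      intro x hx
      obtain ⟨hxA, hx2⟩ := Finset.mem_filter.mp hx
      have := hnocross x hxA
      omega
    have hsplit := Finset.card_filter_add_card_filter_not
      (s := A) (p := fun x => x.2 ≤ p)
    rw [low, hcard, ← pow_add]
    congr 1
    omega

lemma recM {n : ℕ} (hn : 1 ≤ n) :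
    mS n = ∑ p ∈ Finset.Icc 1 n, kS p * mS (n - p) := by
  have hmaps : ∀ A ∈ cA n, fr A ∈ Finset.Icc 1 n := by
    intro A hA
    obtain ⟨⟨h1, _⟩, h2⟩ := fr_spec hn hA
    simp only [Finset.mem_Icc]
    exact ⟨h1, h2⟩
  rw [mS, ← Finset.sum_fiberwise_of_maps_to hmaps]
  apply Finset.sum_congr rfl
  intro p hp
  simp only [Finset.mem_Icc] at hp
  exact fiberM hn hp.1 hp.2

lemma mem_cD {n : ℕ} {A : Finset (ℕ × ℕ)} :
    A ∈ cD n ↔ A ∈ cA n ∧ NS A ∧ FS n A := by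
  simp [cD, Finset.mem_filter]

lemma cK_NS {p : ℕ} {B : Finset (ℕ × ℕ)} (hp : 2 ≤ p) (hB : B ∈ cK p) : NS B := by
  obtain ⟨hBA, hconn⟩ := Finset.mem_filter.mp hB
  obtain ⟨hAC, hBnd⟩ := mem_cA.mp hBA
  intro x hx hsimp
  have hb := hBnd x hx
  rcases Nat.lt_or_ge x.1 p with hc | hc
  · -- x.1 < p : gap x.1 is crossed
    obtain ⟨y, hy, hy1, hy2⟩ := hconn x.1 (by omega) hc
    have hne : x ≠ y := by
      intro h
      rw [← h] at hy2
      omega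
    exact hAC x hx y hy hne ⟨by omega, by omega⟩
  · -- x = (p, p) : gap p-1 is crossed
    have hx1 : x.1 = p := by omega
    obtain ⟨y, hy, hy1, hy2⟩ := hconn (p - 1) (by omega) (by omega)
    have hne : x ≠ y := by
      intro h
      rw [← h] at hy1
      omega
    have hyb := hBnd y hy
    exact hAC x hx y hy hne ⟨by omega, by omega⟩

lemma cK_FS {p : ℕ} {B : Finset (ℕ × ℕ)} (hp : 2 ≤ p) (hB : B ∈ cK p) : FS p B := by
  obtain ⟨hBA, hconn⟩ := Finset.mem_filter.mp hB
  intro r h1 h2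
  rcases Nat.lt_or_ge r p with hc | hc
  · obtain ⟨y, hy, hy1, hy2⟩ := hconn r h1 hc
    exact ⟨y, hy, hy1, by omega⟩
  · have hrp : r = p := by omega
    obtain ⟨y, hy, hy1, hy2⟩ := hconn (p - 1) (by omega) (by omega)
    exact ⟨y, hy, by omega, by omega⟩

lemma fiberD {n p : ℕ} (hn : 1 ≤ n) (hp : 2 ≤ p) (hpn : p ≤ n) :
    ∑ A ∈ (cD n).filter (fun A => fr A = p), (X : Polynomial ℚ) ^ A.card
      = kS p * dS (n - p) := by
  rw [kS, dS, Finset.sum_mul_sum, ← Finset.sum_product']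
  refine Finset.sum_nbij' (fun A => (low p A, high p A))
    (fun BC => BC.1 ∪ shUp p BC.2) ?_ ?_ ?_ ?_ ?_
  · intro A hA
    obtain ⟨hA1, hfr⟩ := Finset.mem_filter.mp hA
    obtain ⟨hAcA, hNS, hFS⟩ := mem_cD.mp hA1
    obtain ⟨hAC, hBnd⟩ := mem_cA.mp hAcA
    obtain ⟨⟨_, hnocross⟩, _⟩ := fr_spec hn hAcA
    rw [hfr] at hnocross
    refine Finset.mem_product.mpr ⟨low_mem_cK hn hAcA hfr, mem_cD.mpr
      ⟨high_mem_cA hn hAcA hfr, ?_, ?_⟩⟩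
    · intro x hx
      obtain ⟨x', hx', h1, h2⟩ := mem_shDn.mp hx
      obtain ⟨hx'A, hx'2⟩ := Finset.mem_filter.mp hx'
      have := hnocross x' hx'A
      have := hNS x' hx'A
      omega
    · intro r hr1 hr2
      obtain ⟨x, hxA, hc1, hc2⟩ := hFS (r + p) (by omega) (by omega)
      have hxn : ¬ x.2 ≤ p := by omega
      have hx1 : ¬ (x.1 ≤ p ∧ p + 1 ≤ x.2) := hnocross x hxA
      refine ⟨(x.1 - p, x.2 - p), mem_shDn.mpr
        ⟨x, Finset.mem_filter.mpr ⟨hxA, hxn⟩, rfl, rfl⟩, ?_, ?_⟩ <;> dsimp only <;> omega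
  · rintro ⟨B, C⟩ hBC
    obtain ⟨hB, hC⟩ := Finset.mem_product.mp hBC
    obtain ⟨hCcA, hCNS, hCFS⟩ := mem_cD.mp hC
    refine Finset.mem_filter.mpr ⟨mem_cD.mpr ⟨comb_cA (by omega) hpn hB hCcA, ?_, ?_⟩,
      comb_fr (by omega) hpn hB hCcA⟩
    · intro x hx
      rcases Finset.mem_union.mp hx with hx' | hx'
      · exact cK_NS hp hB x hx'
      · obtain ⟨c, hc, h1, h2⟩ := mem_shUp.mp hx'
        have := hCNS c hc
        omega
    · intro r hr1 hr2
      rcases le_or_gt r p with hc | hc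
      · obtain ⟨y, hy, hy1, hy2⟩ := cK_FS hp hB r hr1 hc
        exact ⟨y, Finset.mem_union_left _ hy, hy1, hy2⟩
      · obtain ⟨c, hc, hc1, hc2⟩ := hCFS (r - p) (by omega) (by omega)
        refine ⟨(c.1 + p, c.2 + p), Finset.mem_union_right _
          (mem_shUp.mpr ⟨c, hc, rfl, rfl⟩), ?_, ?_⟩ <;> dsimp only <;> omega
  · intro A hA
    obtain ⟨hA1, hfr⟩ := Finset.mem_filter.mp hA
    obtain ⟨hAcA, _, _⟩ := mem_cD.mp hA1
    obtain ⟨⟨_, hnocross⟩, _⟩ := fr_spec hn hAcA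
    rw [hfr] at hnocross
    show low p A ∪ shUp p (high p A) = A
    rw [high, shUp_shDn (by
      intro x hx
      obtain ⟨hxA, hx2⟩ := Finset.mem_filter.mp hx
      have := hnocross x hxA
      omega)]
    rw [low]
    exact Finset.filter_union_filter_not_eq _ A
  · rintro ⟨B, C⟩ hBC
    obtain ⟨hB, hC⟩ := Finset.mem_product.mp hBC
    obtain ⟨hCcA, _, _⟩ := mem_cD.mp hC
    show (low p (B ∪ shUp p C), high p (B ∪ shUp p C)) = (B, C)
    rw [comb_low hpn hB hCcA, comb_high hpn hB hCcA]
  · intro A hA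
    obtain ⟨hA1, hfr⟩ := Finset.mem_filter.mp hA
    obtain ⟨hAcA, _, _⟩ := mem_cD.mp hA1
    obtain ⟨⟨_, hnocross⟩, _⟩ := fr_spec hn hAcA
    rw [hfr] at hnocross
    show (X : Polynomial ℚ) ^ A.card = X ^ (low p A).card * X ^ (high p A).card
    have hcard : (high p A).card = (A.filter (fun x => ¬ x.2 ≤ p)).card := by
      apply shDn_card
      intro x hx
      obtain ⟨hxA, hx2⟩ := Finset.mem_filter.mp hx
      have := hnocross x hxA
      omega
    have hsplit := Finset.card_filter_add_card_filter_not
      (s := A) (p := fun x => x.2 ≤ p)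
    rw [low, hcard, ← pow_add]
    congr 1
    omega

lemma fiberD1 {n : ℕ} (hn : 1 ≤ n) :
    (cD n).filter (fun A => fr A = 1) = ∅ := by
  rw [Finset.eq_empty_iff_forall_notMem]
  intro A hA
  obtain ⟨hA1, hfr⟩ := Finset.mem_filter.mp hA
  obtain ⟨hAcA, hNS, hFS⟩ := mem_cD.mp hA1
  obtain ⟨⟨_, hnocross⟩, _⟩ := fr_spec hn hAcA
  rw [hfr] at hnocross
  obtain ⟨x, hxA, hx1, hx2⟩ := hFS 1 le_rfl hn
  have hb := (mem_cA.mp hAcA).2 x hxA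
  have := hnocross x hxA
  have := hNS x hxA
  omega

lemma recD {n : ℕ} (hn : 1 ≤ n) :
    dS n = ∑ p ∈ Finset.Icc 2 n, kS p * dS (n - p) := by
  have hmaps : ∀ A ∈ cD n, fr A ∈ Finset.Icc 1 n := by
    intro A hA
    obtain ⟨⟨h1, _⟩, h2⟩ := fr_spec hn (mem_cD.mp hA).1
    simp only [Finset.mem_Icc]
    exact ⟨h1, h2⟩
  rw [dS, ← Finset.sum_fiberwise_of_maps_to hmaps]
  have herase : (Finset.Icc 1 n).erase 1 = Finset.Icc 2 n := by
    ext q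
    simp only [Finset.mem_erase, Finset.mem_Icc]
    omega
  rw [← Finset.sum_erase (a := 1) (f := fun p => ∑ A ∈ (cD n).filter (fun A => fr A = p),
    (X : Polynomial ℚ) ^ A.card) (Finset.Icc 1 n)
    (by simp only [fiberD1 hn, Finset.sum_empty])]
  rw [herase]
  apply Finset.sum_congr rfl
  intro p hp
  simp only [Finset.mem_Icc] at hp
  exact fiberD hn hp.1 hp.2

lemma cA_zero : cA 0 = {∅} := by
  ext A
  rw [mem_cA, Finset.mem_singleton]
  constructor
  · intro ⟨_, hB⟩
    rw [Finset.eq_empty_iff_forall_notMem]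
    intro x hx
    have := hB x hx
    omega
  · intro h
    subst h
    exact ⟨fun x hx => absurd hx (Finset.notMem_empty x),
      fun x hx => absurd hx (Finset.notMem_empty x)⟩

lemma mS_zero : mS 0 = 1 := by
  rw [mS, cA_zero, Finset.sum_singleton]
  simp

lemma dS_zero : dS 0 = 1 := by
  have : cD 0 = {∅} := by
    ext A
    rw [mem_cD, Finset.mem_singleton]
    constructor
    · intro ⟨hA, _, _⟩
      rw [cA_zero, Finset.mem_singleton] at hA
      exact hA
    · intro h
      subst h
      refine ⟨by rw [cA_zero]; exact Finset.mem_singleton_self _, ?_, ?_⟩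
      · intro x hx
        exact absurd hx (Finset.notMem_empty x)
      · intro r h1 h2
        omega
  rw [dS, this, Finset.sum_singleton]
  simp

lemma kS_one : kS 1 = 1 + X := by
  have hck : cK 1 = {∅, {(1, 1)}} := by
    ext A
    rw [cK, Finset.mem_filter, mem_cA, Finset.mem_insert, Finset.mem_singleton]
    constructor
    · intro ⟨⟨_, hB⟩, _⟩
      rcases Finset.subset_singleton_iff.mp (fun x hx => by
        have := hB x hx
        have hx1 : x = (1, 1) := Prod.ext (by omega) (by omega)
        rw [hx1]
        exact Finset.mem_singleton_self _) with h | h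
      · exact Or.inl h
      · exact Or.inr h
    · intro h
      rcases h with h | h <;> subst h
      · exact ⟨⟨fun x hx => absurd hx (Finset.notMem_empty x),
          fun x hx => absurd hx (Finset.notMem_empty x)⟩,
          fun r h1 h2 => by omega⟩
      · refine ⟨⟨?_, ?_⟩, fun r h1 h2 => by omega⟩
        · intro x hx y hy hne
          rw [Finset.mem_singleton] at hx hy
          exact absurd (hx.trans hy.symm) hne
        · intro x hx
          rw [Finset.mem_singleton] at hx
          subst hx
          omega
  rw [kS, hck]
  rw [Finset.sum_pair (by
    intro h
    have : (1, 1) ∈ (∅ : Finset (ℕ × ℕ)) := by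
      rw [h]
      exact Finset.mem_singleton_self _
    exact absurd this (Finset.notMem_empty _))]
  simp

lemma recM2 {n : ℕ} (hn : 1 ≤ n) :
    mS n = (1 + X) * mS (n - 1)
      + ∑ p ∈ Finset.Icc 2 n, (X * mS (p - 2)) * mS (n - p) := by
  rw [recM hn]
  have hsplit : Finset.Icc 1 n = insert 1 (Finset.Icc 2 n) := by
    ext q
    simp only [Finset.mem_Icc, Finset.mem_insert]
    omega
  rw [hsplit, Finset.sum_insert (by simp only [Finset.mem_Icc]; omega), kS_one]
  rw [add_right_inj]
  apply Finset.sum_congr rfl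
  intro p hp
  simp only [Finset.mem_Icc] at hp
  rw [kS_eq p hp.1]

lemma recD2 {n : ℕ} (hn : 1 ≤ n) :
    dS n = ∑ p ∈ Finset.Icc 2 n, (X * mS (p - 2)) * dS (n - p) := by
  rw [recD hn]
  apply Finset.sum_congr rfl
  intro p hp
  simp only [Finset.mem_Icc] at hp
  rw [kS_eq p hp.1]

lemma dS_one : dS 1 = 0 := by
  rw [recD2 le_rfl, Finset.Icc_eq_empty (by omega), Finset.sum_empty]

lemma main_id : ∀ n : ℕ, 1 ≤ n →
    X * mS (n - 1) = (1 + X) * dS n + X * dS (n - 1) := by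
  intro n
  induction n using Nat.strong_induction_on with
  | _ n ih =>
    intro hn
    rcases eq_or_lt_of_le hn with h1 | h2
    · have : n = 1 := h1.symm
      subst this
      rw [dS_one, show (1 : ℕ) - 1 = 0 from rfl, mS_zero, dS_zero]
      ring
    · have hn1 : 1 ≤ n - 1 := by omega
      rw [recM2 hn1, recD2 hn, recD2 hn1]
      have hsplit : Finset.Icc 2 n = insert n (Finset.Icc 2 (n - 1)) := by
        ext q
        simp only [Finset.mem_Icc, Finset.mem_insert]
        omega
      rw [hsplit, Finset.sum_insert (by simp only [Finset.mem_Icc]; omega),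
        Nat.sub_self, dS_zero, mul_one]
      have hIH : ∀ p ∈ Finset.Icc 2 (n - 1),
          (1 + X) * ((X * mS (p - 2)) * dS (n - p))
            + X * ((X * mS (p - 2)) * dS (n - 1 - p))
          = X * ((X * mS (p - 2)) * mS (n - 1 - p)) := by
        intro p hp
        simp only [Finset.mem_Icc] at hp
        have h := ih (n - p) (by omega) (by omega)
        rw [show n - p - 1 = n - 1 - p from by omega] at h
        calc (1 + X) * ((X * mS (p - 2)) * dS (n - p))
              + X * ((X * mS (p - 2)) * dS (n - 1 - p))
            = (X * mS (p - 2)) * ((1 + X) * dS (n - p) + X * dS (n - 1 - p)) := by ring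
          _ = (X * mS (p - 2)) * (X * mS (n - 1 - p)) := by rw [← h]
          _ = X * ((X * mS (p - 2)) * mS (n - 1 - p)) := by ring
      have hsum : (1 + X) * (∑ p ∈ Finset.Icc 2 (n - 1), (X * mS (p - 2)) * dS (n - p))
          + X * (∑ p ∈ Finset.Icc 2 (n - 1), (X * mS (p - 2)) * dS (n - 1 - p))
          = X * (∑ p ∈ Finset.Icc 2 (n - 1), (X * mS (p - 2)) * mS (n - 1 - p)) := by
        rw [Finset.mul_sum, Finset.mul_sum, Finset.mul_sum, ← Finset.sum_add_distrib]
        apply Finset.sum_congr rfl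
        intro p hp
        exact hIH p hp
      rw [show n - 1 - 1 = n - 2 from by omega]
      calc X * ((1 + X) * mS (n - 2)
            + ∑ p ∈ Finset.Icc 2 (n - 1), (X * mS (p - 2)) * mS (n - 1 - p))
          = (1 + X) * (X * mS (n - 2))
            + X * (∑ p ∈ Finset.Icc 2 (n - 1), (X * mS (p - 2)) * mS (n - 1 - p)) := by
            ring
        _ = (1 + X) * (X * mS (n - 2))
            + ((1 + X) * (∑ p ∈ Finset.Icc 2 (n - 1), (X * mS (p - 2)) * dS (n - p))
              + X * (∑ p ∈ Finset.Icc 2 (n - 1), (X * mS (p - 2)) * dS (n - 1 - p))) := by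
            rw [hsum]
        _ = (1 + X) * (X * mS (n - 2)
              + ∑ p ∈ Finset.Icc 2 (n - 1), (X * mS (p - 2)) * dS (n - p))
            + X * ∑ p ∈ Finset.Icc 2 (n - 1), (X * mS (p - 2)) * dS (n - 1 - p) := by
            ring

instance instFinARoot (n : ℕ) : Fintype (ARoot n) :=
  Fintype.subtype ((box n).filter fun p => p.1 ≤ p.2)
    (by
      intro x
      simp only [box, Finset.mem_filter, Finset.mem_product, Finset.mem_Icc]
      omega)


def fromP (n : ℕ) (B : Finset (ℕ × ℕ)) : Finset (ARoot n) := by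
  unfold ARoot
  exact B.subtype (fun p => 1 ≤ p.1 ∧ p.1 ≤ p.2 ∧ p.2 ≤ n)

lemma mem_fromP {n : ℕ} {B : Finset (ℕ × ℕ)} (a : ARoot n) :
    a ∈ fromP n B ↔ (a.1 ∈ B) := by
  unfold fromP
  exact Finset.mem_subtype

lemma catA_eq (n : ℕ) : CatA n = mS n := by
  rw [CatA, finsum_mem_eq_finite_toFinset_sum _ (Set.toFinite _)]
  refine Finset.sum_nbij' (fun A => A.image Subtype.val)
    (fun B => fromP n B) ?_ ?_ ?_ ?_ ?_
  · intro A hA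
    simp only [Set.Finite.mem_toFinset, Set.mem_setOf_eq] at hA
    refine mem_cA.mpr ⟨?_, ?_⟩
    · intro x hx y hy hxy
      replace hx := Finset.mem_image.mp hx
      replace hy := Finset.mem_image.mp hy
      obtain ⟨a, ha, rfl⟩ := hx
      obtain ⟨b, hb, rfl⟩ := hy
      have hne : a ≠ b := fun h => hxy (by rw [h])
      exact hA (Finset.mem_coe.mpr ha) (Finset.mem_coe.mpr hb) hne
    · intro x hx
      replace hx := Finset.mem_image.mp hx
      obtain ⟨a, _, rfl⟩ := hx
      exact a.2
  · intro B hB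
    simp only [Set.Finite.mem_toFinset, Set.mem_setOf_eq]
    intro x hx y hy hxy
    rw [Finset.mem_coe, mem_fromP] at hx
    rw [Finset.mem_coe, mem_fromP] at hy
    exact (mem_cA.mp hB).1 x.1 hx y.1 hy (fun h => hxy (Subtype.ext h))
  · intro A _
    ext a
    rw [mem_fromP]
    constructor
    · intro h
      obtain ⟨b, hb, hba⟩ := Finset.mem_image.mp h
      rwa [show b = a from Subtype.ext hba] at hb
    · intro h; exact Finset.mem_image_of_mem _ h
  · intro B hB
    ext x
    refine Finset.mem_image.trans ?_
    constructor
    · rintro ⟨a, ha, rfl⟩; exact (mem_fromP a).mp ha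
    · intro hx
      exact ⟨⟨x, (mem_cA.mp hB).2 x hx⟩, (mem_fromP _).mpr hx, rfl⟩
  · intro A _
    exact congrArg (fun k => (X : Polynomial ℚ) ^ k) (Finset.card_image_of_injective A Subtype.val_injective).symm

lemma catppA_eq (n : ℕ) : CatppA n = dS n := by
  rw [CatppA, finsum_mem_eq_finite_toFinset_sum _ (Set.toFinite _)]
  refine Finset.sum_nbij' (fun A => A.image Subtype.val)
    (fun B => fromP n B) ?_ ?_ ?_ ?_ ?_
  · intro A hA
    simp only [Set.Finite.mem_toFinset, Set.mem_setOf_eq] at hA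
    obtain ⟨h1, h2, h3⟩ := hA
    refine mem_cD.mpr ⟨mem_cA.mpr ⟨?_, ?_⟩, ?_, ?_⟩
    · intro x hx y hy hxy
      replace hx := Finset.mem_image.mp hx
      replace hy := Finset.mem_image.mp hy
      obtain ⟨a, ha, rfl⟩ := hx
      obtain ⟨b, hb, rfl⟩ := hy
      exact h1 (Finset.mem_coe.mpr ha) (Finset.mem_coe.mpr hb) (fun h => hxy (by rw [h]))
    · intro x hx
      replace hx := Finset.mem_image.mp hx
      obtain ⟨a, _, rfl⟩ := hx
      exact a.2
    · intro x hx
      replace hx := Finset.mem_image.mp hx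
      obtain ⟨a, ha, rfl⟩ := hx
      exact h2 a ha
    · intro r h1r hrn
      obtain ⟨x, hx, hx2⟩ := h3 r h1r hrn
      exact ⟨x.1, Finset.mem_image_of_mem _ hx, hx2⟩
  · intro B hB
    obtain ⟨hcA', hNS, hFS⟩ := mem_cD.mp hB
    obtain ⟨hAC, hB2⟩ := mem_cA.mp hcA' 
    simp only [Set.Finite.mem_toFinset, Set.mem_setOf_eq]
    refine ⟨?_, ?_, ?_⟩
    · intro x hx y hy hxy
      rw [Finset.mem_coe, mem_fromP] at hx
      rw [Finset.mem_coe, mem_fromP] at hy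
      exact hAC x.1 hx y.1 hy (fun h => hxy (Subtype.ext h))
    · intro x hx
      rw [mem_fromP] at hx
      exact hNS x.1 hx
    · intro r h1r hrn
      obtain ⟨x, hx, hx2⟩ := hFS r h1r hrn
      exact ⟨⟨x, hB2 x hx⟩, (mem_fromP _).mpr hx, hx2⟩
  · intro A _
    ext a
    rw [mem_fromP]
    constructor
    · intro h
      obtain ⟨b, hb, hba⟩ := Finset.mem_image.mp h
      rwa [show b = a from Subtype.ext hba] at hb
    · intro h; exact Finset.mem_image_of_mem _ h
  · intro B hB
    ext x
    refine Finset.mem_image.trans ?_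
    constructor
    · rintro ⟨a, ha, rfl⟩; exact (mem_fromP a).mp ha
    · intro hx
      exact ⟨⟨x, (mem_cA.mp (mem_cD.mp hB).1).2 x hx⟩, (mem_fromP _).mpr hx, rfl⟩
  · intro A _
    exact congrArg (fun k => (X : Polynomial ℚ) ^ k) (Finset.card_image_of_injective A Subtype.val_injective).symm


end CatAux

/-- The identity `(1+q)·Cat⁺⁺(Aₙ; q) + q·Cat⁺⁺(Aₙ₋₁; q) = q·Cat(Aₙ₋₁; q)`. -/
theorem catppA_identity (n : ℕ) (hn : 1 ≤ n) :
    (1 + X) * CatppA n + X * CatppA (n - 1) = X * CatA (n - 1) := by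
  rw [CatAux.catppA_eq, CatAux.catppA_eq, CatAux.catA_eq]
  exact (CatAux.main_id n hn).symm
end

section
/- For every integer n ≥ 0, the polynomial identity Cat(A_n; q) = Cat⁺⁺(A_n; q) + (1+q)·Σ_{i=0}^{n−1} Cat⁺⁺(A_i; q)·Cat(A_{n−i−1}; q) holds. -/
open Polynomial

instance (n : ℕ) : DecidableEq (ARoot n) := fun a b =>
  decidable_of_iff (a.1 = b.1) Subtype.ext_iff.symm

noncomputable instance (n : ℕ) : Fintype (ARoot n) :=
  Fintype.ofInjective
    (fun x : ARoot n => ((⟨x.1.1, by have := x.2; omega⟩ : Fin (n+1)),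
      (⟨x.1.2, by have := x.2; omega⟩ : Fin (n+1))))
    (by
      intro a b h
      apply Subtype.ext
      have h1 := congrArg (fun z : Fin (n+1) × Fin (n+1) => z.1.1) h
      have h2 := congrArg (fun z : Fin (n+1) × Fin (n+1) => z.2.1) h
      simp only at h1 h2
      exact Prod.ext h1 h2)

open Classical in
noncomputable def SS (n : ℕ) : Finset (Finset (ARoot n)) :=
  Finset.univ.filter (fun A => IsAntichain (aLe n) (A : Set (ARoot n)))

open Classical in
noncomputable def TT (n : ℕ) : Finset (Finset (ARoot n)) :=
  Finset.univ.filter (fun A => IsAntichain (aLe n) (A : Set (ARoot n)) ∧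
    (∀ x ∈ A, ¬ aSimple n x) ∧ aFullSupport n A)

lemma catA_eq (n : ℕ) : CatA n = ∑ A ∈ SS n, X ^ A.card := by
  classical
  rw [CatA, ← finsum_mem_coe_finset]
  congr 1
  ext A
  simp [SS]

lemma catppA_eq (n : ℕ) : CatppA n = ∑ A ∈ TT n, X ^ A.card := by
  classical
  rw [CatppA, ← finsum_mem_coe_finset]
  congr 1
  ext A
  simp [TT]

def bad (n : ℕ) (A : Finset (ARoot n)) (q : ℕ) : Prop :=
  1 ≤ q ∧ q ≤ n ∧ ((∀ x ∈ A, ¬ (x.1.1 ≤ q ∧ q ≤ x.1.2)) ∨ ∃ x ∈ A, x.1 = (q, q))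

noncomputable def cls (n : ℕ) (A : Finset (ARoot n)) : ℕ :=
  open Classical in if h : ∃ q, bad n A q then Nat.find h else 0

lemma cls_le (n : ℕ) (A : Finset (ARoot n)) : cls n A ≤ n := by
  classical
  rw [cls]
  split
  · next h => exact (Nat.find_spec h).2.1
  · omega

lemma cls_eq_zero_iff (n : ℕ) (A : Finset (ARoot n)) :
    cls n A = 0 ↔ ((∀ x ∈ A, ¬ aSimple n x) ∧ aFullSupport n A) := by
  classical
  rw [cls]
  split
  · next h =>
    constructor
    · intro h0
      have := (Nat.find_spec h).1
      omega
    · rintro ⟨hns, hfs⟩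
      exfalso
      obtain ⟨h1, h2, h3 | h3⟩ := Nat.find_spec h
      · obtain ⟨x, hx, hx1, hx2⟩ := hfs _ h1 h2
        exact h3 x hx ⟨hx1, hx2⟩
      · obtain ⟨x, hx, hxe⟩ := h3
        apply hns x hx
        unfold aSimple
        rw [hxe]
  · next h =>
    push_neg at h
    constructor
    · intro _
      constructor
      · intro x hx hs
        have := h x.1.1
        unfold bad at this
        unfold aSimple at hs
        have hp := x.2
        apply this
        refine ⟨hp.1, by omega, Or.inr ⟨x, hx, ?_⟩⟩
        ext <;> simp [← hs]
      · intro m h1 h2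
        have := h m
        unfold bad at this
        by_contra hc
        push_neg at hc
        exact this ⟨h1, h2, Or.inl (by intro x hx ⟨ha, hb⟩; exact absurd hb (by have := hc x hx; omega))⟩
    · intro _; rfl

section Decomp

variable (n i : ℕ) (h : i + 1 ≤ n)

def el (x : ARoot i) : ARoot n :=
  ⟨x.1, x.2.1, x.2.2.1, by have := x.2.2.2; omega⟩

def eh (x : ARoot (n - i - 1)) : ARoot n :=
  ⟨(x.1.1 + (i+1), x.1.2 + (i+1)), by
    have := x.2
    refine ⟨?_, ?_, ?_⟩ <;> simp <;> omega⟩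

def spr : ARoot n := ⟨(i+1, i+1), by refine ⟨?_, ?_, ?_⟩ <;> simp <;> omega⟩

variable {n i}

@[simp] lemma el_fst (x : ARoot i) : (el n i h x).1.1 = x.1.1 := rfl
@[simp] lemma el_snd (x : ARoot i) : (el n i h x).1.2 = x.1.2 := rfl
@[simp] lemma eh_fst (x : ARoot (n - i - 1)) : (eh n i h x).1.1 = x.1.1 + (i+1) := rfl
@[simp] lemma eh_snd (x : ARoot (n - i - 1)) : (eh n i h x).1.2 = x.1.2 + (i+1) := rfl
@[simp] lemma spr_fst : (spr n i h).1.1 = i + 1 := rfl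
@[simp] lemma spr_snd : (spr n i h).1.2 = i + 1 := rfl

lemma el_inj : Function.Injective (el n i h) := by
  intro a b hab
  have h1 := congrArg (fun z : ARoot n => z.1) hab
  exact Subtype.ext h1

lemma eh_inj : Function.Injective (eh n i h) := by
  intro a b hab
  have h1 := congrArg (fun z : ARoot n => z.1.1) hab
  have h2 := congrArg (fun z : ARoot n => z.1.2) hab
  simp only [eh_fst, eh_snd] at h1 h2
  exact Subtype.ext (Prod.ext (by omega) (by omega))

noncomputable def G (b : Bool) (B : Finset (ARoot i)) (C : Finset (ARoot (n - i - 1))) :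
    Finset (ARoot n) :=
  (B.image (el n i h) ∪ C.image (eh n i h)) ∪ (if b then {spr n i h} else ∅)

lemma mem_G {b : Bool} {B : Finset (ARoot i)} {C : Finset (ARoot (n - i - 1))}
    (y : ARoot n) :
    y ∈ G h b B C ↔ ((∃ x ∈ B, el n i h x = y) ∨ (∃ x ∈ C, eh n i h x = y) ∨
      (b = true ∧ y = spr n i h)) := by
  cases b <;> simp [G] <;> rw [or_comm, or_assoc]

lemma antichain_G {b : Bool} {B : Finset (ARoot i)} {C : Finset (ARoot (n - i - 1))}
    (hB : IsAntichain (aLe i) (B : Set (ARoot i)))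
    (hC : IsAntichain (aLe (n - i - 1)) (C : Set (ARoot (n - i - 1)))) :
    IsAntichain (aLe n) ((G h b B C : Finset (ARoot n)) : Set (ARoot n)) := by
  intro y hy z hz hyz hle
  rw [Finset.mem_coe, mem_G] at hy hz
  obtain ⟨hle1, hle2⟩ := hle
  rcases hy with ⟨x1, hx1, rfl⟩ | ⟨x1, hx1, rfl⟩ | ⟨hb1, rfl⟩ <;>
    rcases hz with ⟨x2, hx2, rfl⟩ | ⟨x2, hx2, rfl⟩ | ⟨hb2, rfl⟩
  · exact hB (Finset.mem_coe.mpr hx1) (Finset.mem_coe.mpr hx2)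
      (fun e => hyz (congrArg _ e)) ⟨hle1, hle2⟩
  · have := x1.2; have := x2.2
    simp only [el_fst, el_snd, eh_fst, eh_snd] at hle1 hle2
    omega
  · have := x1.2
    simp only [el_fst, el_snd, spr_fst, spr_snd] at hle1 hle2
    omega
  · have := x1.2; have := x2.2
    simp only [el_fst, el_snd, eh_fst, eh_snd] at hle1 hle2
    omega
  · refine hC (Finset.mem_coe.mpr hx1) (Finset.mem_coe.mpr hx2)
      (fun e => hyz (congrArg _ e)) ?_
    simp only [eh_fst, eh_snd] at hle1 hle2
    exact ⟨by omega, by omega⟩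
  · have := x1.2
    simp only [eh_fst, eh_snd, spr_fst, spr_snd] at hle1 hle2
    omega
  · have := x2.2
    simp only [el_fst, el_snd, spr_fst, spr_snd] at hle1 hle2
    have : x2.1 = (i+1, i+1) := Prod.ext (by omega) (by omega)
    exact hyz (Subtype.ext this.symm)
  · have := x2.2
    simp only [eh_fst, eh_snd, spr_fst, spr_snd] at hle1 hle2
    omega
  · exact hyz rfl

lemma card_G {b : Bool} {B : Finset (ARoot i)} {C : Finset (ARoot (n - i - 1))} :
    (G h b B C).card = B.card + C.card + (if b then 1 else 0) := by
  classical
  have hd1 : Disjoint (B.image (el n i h)) (C.image (eh n i h)) := by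
    rw [Finset.disjoint_left]
    intro y hy hz
    simp only [Finset.mem_image] at hy hz
    obtain ⟨x1, _, rfl⟩ := hy
    obtain ⟨x2, _, he⟩ := hz
    have h1 := congrArg (fun z : ARoot n => z.1.1) he
    have := x1.2; have := x2.2
    simp only [eh_fst, el_fst] at h1
    omega
  have hd2 : Disjoint (B.image (el n i h) ∪ C.image (eh n i h))
      (if b then {spr n i h} else ∅) := by
    cases b
    · simp
    · simp only [if_true, Finset.disjoint_singleton_right, Finset.mem_union,
        Finset.mem_image]
      rintro (⟨x, _, he⟩ | ⟨x, _, he⟩)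
      · have h1 := congrArg (fun z : ARoot n => z.1.2) he
        have := x.2
        simp only [el_snd, spr_snd] at h1
        omega
      · have h1 := congrArg (fun z : ARoot n => z.1.1) he
        have := x.2
        simp only [eh_fst, spr_fst] at h1
        omega
  rw [G, Finset.card_union_of_disjoint hd2, Finset.card_union_of_disjoint hd1,
    Finset.card_image_of_injective _ (el_inj h), Finset.card_image_of_injective _ (eh_inj h)]
  cases b <;> simp

lemma cls_G {b : Bool} {B : Finset (ARoot i)} {C : Finset (ARoot (n - i - 1))}
    (hBs : ∀ x ∈ B, ¬ aSimple i x) (hBf : aFullSupport i B) :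
    cls n (G h b B C) = i + 1 := by
  classical
  have hbad : bad n (G h b B C) (i + 1) := by
    refine ⟨by omega, h, ?_⟩
    cases b
    · left
      intro y hy ⟨hy1, hy2⟩
      rw [mem_G] at hy
      rcases hy with ⟨x, _, rfl⟩ | ⟨x, _, rfl⟩ | ⟨hb, _⟩
      · have := x.2; simp only [el_snd] at hy2; omega
      · have := x.2; simp only [eh_fst] at hy1; omega
      · exact absurd hb (by simp)
    · right
      exact ⟨spr n i h, (mem_G h _).mpr (Or.inr (Or.inr ⟨rfl, rfl⟩)), rfl⟩
  have hmin : ∀ q < i + 1, ¬ bad n (G h b B C) q := by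
    intro q hq ⟨hq1, hqn, hd⟩
    rcases hd with hd | ⟨y, hy, hye⟩
    · obtain ⟨x, hx, hx1, hx2⟩ := hBf q hq1 (by omega)
      exact hd (el n i h x) ((mem_G h _).mpr (Or.inl ⟨x, hx, rfl⟩)) ⟨hx1, hx2⟩
    · rw [mem_G] at hy
      have hy1 := congrArg Prod.fst hye
      have hy2 := congrArg Prod.snd hye
      simp only at hy1 hy2
      rcases hy with ⟨x, hx, rfl⟩ | ⟨x, hx, rfl⟩ | ⟨_, rfl⟩
      · apply hBs x hx
        unfold aSimple
        simp only [el_fst] at hy1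
        simp only [el_snd] at hy2
        omega
      · have := x.2
        simp only [eh_fst] at hy1
        omega
      · simp only [spr_fst] at hy1
        omega
  have hex : ∃ q, bad n (G h b B C) q := ⟨i + 1, hbad⟩
  rw [cls, dif_pos hex]
  exact (Nat.find_eq_iff hex).mpr ⟨hbad, hmin⟩

lemma spr_mem_G {b : Bool} {B : Finset (ARoot i)} {C : Finset (ARoot (n - i - 1))} :
    spr n i h ∈ G h b B C ↔ b = true := by
  rw [mem_G]
  constructor
  · rintro (⟨x, _, he⟩ | ⟨x, _, he⟩ | ⟨hb, _⟩)
    · have h1 := congrArg (fun z : ARoot n => z.1.2) he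
      have := x.2; simp only [el_snd, spr_snd] at h1; omega
    · have h1 := congrArg (fun z : ARoot n => z.1.1) he
      have := x.2; simp only [eh_fst, spr_fst] at h1; omega
    · exact hb
  · exact fun hb => Or.inr (Or.inr ⟨hb, rfl⟩)

lemma el_mem_G {b : Bool} {B : Finset (ARoot i)} {C : Finset (ARoot (n - i - 1))}
    (x : ARoot i) : el n i h x ∈ G h b B C ↔ x ∈ B := by
  rw [mem_G]
  constructor
  · rintro (⟨x', hx', he⟩ | ⟨x', hx', he⟩ | ⟨_, he⟩)
    · rwa [← el_inj h he]
    · have h1 := congrArg (fun z : ARoot n => z.1.1) he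
      have h2 := congrArg (fun z : ARoot n => z.1.2) he
      have := x.2; have := x'.2
      simp only [eh_fst, el_fst, eh_snd, el_snd] at h1 h2
      omega
    · have h1 := congrArg (fun z : ARoot n => z.1.2) he
      have := x.2
      simp only [el_snd, spr_snd] at h1
      omega
  · exact fun hx => Or.inl ⟨x, hx, rfl⟩

lemma eh_mem_G {b : Bool} {B : Finset (ARoot i)} {C : Finset (ARoot (n - i - 1))}
    (x : ARoot (n - i - 1)) : eh n i h x ∈ G h b B C ↔ x ∈ C := by
  rw [mem_G]
  constructor
  · rintro (⟨x', hx', he⟩ | ⟨x', hx', he⟩ | ⟨_, he⟩)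
    · have h1 := congrArg (fun z : ARoot n => z.1.1) he
      have := x.2; have := x'.2
      simp only [el_fst, eh_fst] at h1
      omega
    · rwa [← eh_inj h he]
    · have h1 := congrArg (fun z : ARoot n => z.1.1) he
      have := x.2
      simp only [eh_fst, spr_fst] at h1
      omega
  · exact fun hx => Or.inr (Or.inl ⟨x, hx, rfl⟩)

end Decomp

lemma fiber_zero (n : ℕ) : (SS n).filter (fun A => cls n A = 0) = TT n := by
  classical
  ext A
  simp only [Finset.mem_filter, SS, TT, Finset.mem_univ, true_and, cls_eq_zero_iff]

lemma fiber_sum (n i : ℕ) (h : i + 1 ≤ n) :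
    ∑ A ∈ (SS n).filter (fun A => cls n A = i + 1), (X : ℚ[X]) ^ A.card
      = (1 + X) * ((∑ B ∈ TT i, (X : ℚ[X]) ^ B.card) *
          ∑ C ∈ SS (n - i - 1), (X : ℚ[X]) ^ C.card) := by
  classical
  have step1 : ∑ x ∈ (Finset.univ : Finset Bool) ×ˢ (TT i ×ˢ SS (n - i - 1)),
        (cond x.1 (X : ℚ[X]) 1) * ((X : ℚ[X]) ^ x.2.1.card * X ^ x.2.2.card)
      = ∑ A ∈ (SS n).filter (fun A => cls n A = i + 1), (X : ℚ[X]) ^ A.card := by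
    refine Finset.sum_bij (fun x _ => G h x.1 x.2.1 x.2.2) ?_ ?_ ?_ ?_
    · -- maps into fiber
      rintro ⟨b, B, C⟩ hx
      rw [Finset.mem_product] at hx
      obtain ⟨-, hx⟩ := hx
      rw [Finset.mem_product] at hx
      obtain ⟨hBT, hCS⟩ := hx
      simp only [TT, Finset.mem_filter, Finset.mem_univ, true_and] at hBT
      simp only [SS, Finset.mem_filter, Finset.mem_univ, true_and] at hCS
      obtain ⟨hBa, hBs, hBf⟩ := hBT
      refine Finset.mem_filter.mpr ⟨?_, cls_G h hBs hBf⟩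
      simp only [SS, Finset.mem_filter, Finset.mem_univ, true_and]
      exact antichain_G h hBa hCS
    · -- injective
      rintro ⟨ab, aB, aC⟩ ha1 ⟨bb, bB, bC⟩ ha2 hG
      simp only at hG
      have hbb : ab = bb := by
        apply Bool.eq_iff_iff.mpr
        rw [← spr_mem_G h (B := aB) (C := aC), ← spr_mem_G h (B := bB) (C := bC), hG]
      have hBB : aB = bB := by
        ext x
        rw [← el_mem_G h (b := ab) (B := aB) (C := aC) x, hG, el_mem_G h]
      have hCC : aC = bC := by
        ext x
        rw [← eh_mem_G h (b := ab) (B := aB) (C := aC) x, hG, eh_mem_G h]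
      rw [hbb, hBB, hCC]
    · -- surjective
      intro A hA
      rw [Finset.mem_filter] at hA
      obtain ⟨hAS, hcls⟩ := hA
      have hanti : IsAntichain (aLe n) (A : Set (ARoot n)) := by
        simpa only [SS, Finset.mem_filter, Finset.mem_univ, true_and] using hAS
      have hex : ∃ q, bad n A q := by
        by_contra hne
        rw [cls, dif_neg hne] at hcls
        omega
      have hfind : Nat.find hex = i + 1 := by rw [cls, dif_pos hex] at hcls; exact hcls
      have hbad : bad n A (i + 1) := hfind ▸ Nat.find_spec hex
      have hmin : ∀ q < i + 1, ¬ bad n A q := fun q hq =>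
        Nat.find_min hex (by rw [hfind]; exact hq)
      have htri : ∀ x ∈ A, x.1.2 ≤ i ∨ x.1 = (i+1, i+1) ∨ i + 2 ≤ x.1.1 := by
        intro x hx
        by_contra hc
        push_neg at hc
        obtain ⟨hc1, hc2, hc3⟩ := hc
        have hx2 := x.2
        obtain ⟨-, -, hd | ⟨y, hy, hye⟩⟩ := hbad
        · exact hd x hx ⟨by omega, by omega⟩
        · have hyx : y ≠ x := fun e => hc2 (e ▸ hye)
          have hy1 : y.1.1 = i + 1 := by rw [hye]
          have hy2 : y.1.2 = i + 1 := by rw [hye]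
          exact hanti (Finset.mem_coe.mpr hy) (Finset.mem_coe.mpr hx) hyx
            ⟨by omega, by omega⟩
      set bb : Bool := if spr n i h ∈ A then true else false with hbbdef
      set B : Finset (ARoot i) := (A.filter (fun x => x.1.2 ≤ i)).attach.image
        (fun x => (⟨x.1.1, by
          have h1 := x.1.2
          have h2 := (Finset.mem_filter.mp x.2).2
          exact ⟨h1.1, h1.2.1, h2⟩⟩ : ARoot i)) with hBdef
      set C : Finset (ARoot (n - i - 1)) :=
        (A.filter (fun x => i + 2 ≤ x.1.1)).attach.image
        (fun x => (⟨(x.1.1.1 - (i+1), x.1.1.2 - (i+1)), by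
          have h1 := x.1.2
          have h2 := (Finset.mem_filter.mp x.2).2
          refine ⟨?_, ?_, ?_⟩ <;> simp <;> omega⟩ : ARoot (n - i - 1))) with hCdef
      have hBmem : ∀ y : ARoot i, y ∈ B ↔ el n i h y ∈ A := by
        intro y
        constructor
        · intro hy
          rw [hBdef] at hy; replace hy := Finset.mem_image.mp hy
          obtain ⟨x, -, hxy⟩ := hy
          have hxf := Finset.mem_filter.mp x.2
          have hval : y.1 = x.1.1 := (congrArg Subtype.val hxy).symm
          have he : el n i h y = x.1 := Subtype.ext hval
          rw [he]
          exact hxf.1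
        · intro hy
          rw [hBdef]; refine Finset.mem_image.mpr ?_
          refine ⟨⟨el n i h y, Finset.mem_filter.mpr ⟨hy, y.2.2.2⟩⟩,
            Finset.mem_attach _ _, Subtype.ext rfl⟩
      have hCmem : ∀ y : ARoot (n - i - 1), y ∈ C ↔ eh n i h y ∈ A := by
        intro y
        have hp := y.2
        constructor
        · intro hy
          rw [hCdef] at hy; replace hy := Finset.mem_image.mp hy
          obtain ⟨x, -, hxy⟩ := hy
          have hxf := Finset.mem_filter.mp x.2
          have hx1 := x.1.2
          have hval : y.1 = (x.1.1.1 - (i+1), x.1.1.2 - (i+1)) :=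
            (congrArg Subtype.val hxy).symm
          have hval1 : y.1.1 = x.1.1.1 - (i+1) := by rw [hval]
          have hval2 : y.1.2 = x.1.1.2 - (i+1) := by rw [hval]
          have he : eh n i h y = x.1 := by
            apply Subtype.ext
            apply Prod.ext <;> simp only [eh_fst, eh_snd] <;> omega
          rw [he]
          exact hxf.1
        · intro hy
          rw [hCdef]; refine Finset.mem_image.mpr ?_
          have hmf : eh n i h y ∈ A.filter (fun x => i + 2 ≤ x.1.1) := by
            refine Finset.mem_filter.mpr ⟨hy, ?_⟩
            simp only [eh_fst]
            omega
          refine ⟨⟨eh n i h y, hmf⟩, Finset.mem_attach _ _, ?_⟩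
          apply Subtype.ext
          apply Prod.ext <;> simp <;> omega
      have hGA : G h bb B C = A := by
        ext y
        rw [mem_G]
        constructor
        · rintro (⟨x, hx, rfl⟩ | ⟨x, hx, rfl⟩ | ⟨hb, rfl⟩)
          · exact (hBmem x).mp hx
          · exact (hCmem x).mp hx
          · by_cases hsp : spr n i h ∈ A
            · exact hsp
            · rw [hbbdef, if_neg hsp] at hb
              exact absurd hb (by simp)
        · intro hy
          have hp := y.2
          rcases htri y hy with h1 | h1 | h1
          · refine Or.inl ⟨⟨y.1, y.2.1, y.2.2.1, h1⟩, ?_, Subtype.ext rfl⟩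
            refine (hBmem _).mpr ?_
            exact hy
          · have hysp : y = spr n i h := Subtype.ext h1
            refine Or.inr (Or.inr ⟨?_, hysp⟩)
            rw [hbbdef, if_pos (hysp ▸ hy)]
          · have hez : ∃ z : ARoot (n - i - 1), eh n i h z = y := by
              refine ⟨⟨(y.1.1 - (i+1), y.1.2 - (i+1)), ?_⟩, ?_⟩
              · refine ⟨?_, ?_, ?_⟩ <;> simp <;> omega
              · apply Subtype.ext
                apply Prod.ext
                · show y.1.1 - (i+1) + (i+1) = y.1.1; omega
                · show y.1.2 - (i+1) + (i+1) = y.1.2; omega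
            obtain ⟨z, hz⟩ := hez
            exact Or.inr (Or.inl ⟨z, (hCmem z).mpr (by rw [hz]; exact hy), hz⟩)
      have hprod : (bb, B, C) ∈ (Finset.univ : Finset Bool) ×ˢ (TT i ×ˢ SS (n - i - 1)) := by
        rw [Finset.mem_product]
        refine ⟨Finset.mem_univ _, ?_⟩
        rw [Finset.mem_product]
        constructor
        · simp only [TT, Finset.mem_filter, Finset.mem_univ, true_and]
          refine ⟨?_, ?_, ?_⟩
          · intro x hx y' hy' hne hle
            have hxA := (hBmem x).mp (Finset.mem_coe.mp hx)
            have hyA := (hBmem y').mp (Finset.mem_coe.mp hy')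
            exact hanti (Finset.mem_coe.mpr hxA) (Finset.mem_coe.mpr hyA)
              (fun e => hne (el_inj h e)) hle
          · intro x hx hs
            have hxA := (hBmem x).mp hx
            have hx2 := x.2
            refine hmin x.1.1 (by omega) ⟨hx2.1, by omega, Or.inr ⟨el n i h x, hxA, ?_⟩⟩
            exact Prod.ext rfl hs.symm
          · intro m hm1 hm2
            have hnL : ¬ (∀ x ∈ A, ¬ (x.1.1 ≤ m ∧ m ≤ x.1.2)) :=
              fun hL => hmin m (by omega) ⟨hm1, by omega, Or.inl hL⟩
            push_neg at hnL
            obtain ⟨x, hx, hx1, hx2⟩ := hnL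
            rcases htri x hx with ht | ht | ht
            · refine ⟨⟨x.1, x.2.1, x.2.2.1, ht⟩, ?_, hx1, hx2⟩
              refine (hBmem _).mpr ?_
              exact hx
            · have h5 : x.1.1 = i + 1 := by rw [ht]
              omega
            · omega
        · simp only [SS, Finset.mem_filter, Finset.mem_univ, true_and]
          intro x hx y' hy' hne hle
          have hxA := (hCmem x).mp (Finset.mem_coe.mp hx)
          have hyA := (hCmem y').mp (Finset.mem_coe.mp hy')
          obtain ⟨l1, l2⟩ := hle
          refine hanti (Finset.mem_coe.mpr hxA) (Finset.mem_coe.mpr hyA)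
            (fun e => hne (eh_inj h e)) ⟨?_, ?_⟩
          · simp only [eh_fst]; omega
          · simp only [eh_snd]; omega
      exact ⟨(bb, B, C), hprod, hGA⟩
    · -- values agree
      rintro ⟨b, B, C⟩ -
      simp only
      rw [card_G h]
      cases b <;> simp [pow_add] <;> try ring
  rw [← step1, Finset.sum_product, Fintype.sum_bool]
  have hPQ : ∑ y ∈ TT i ×ˢ SS (n - i - 1), (X : ℚ[X]) ^ y.1.card * X ^ y.2.card
      = (∑ B ∈ TT i, (X : ℚ[X]) ^ B.card) * ∑ C ∈ SS (n - i - 1), (X : ℚ[X]) ^ C.card := by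
    rw [Finset.sum_mul_sum]
    exact Finset.sum_product _ _ _
  simp only [cond_true, cond_false, one_mul]
  rw [← Finset.mul_sum, hPQ]
  ring


/-- The identity `Cat(Aₙ; q) = Cat⁺⁺(Aₙ; q) + (1+q)·Σᵢ₌₀ⁿ⁻¹ Cat⁺⁺(Aᵢ; q)·Cat(Aₙ₋ᵢ₋₁; q)`. -/
theorem catA_from_catppA (n : ℕ) :
    CatA n = CatppA n + (1 + X) * ∑ i ∈ Finset.range n, CatppA i * CatA (n - i - 1) := by
  classical
  rw [catA_eq, catppA_eq]
  have hfib := Finset.sum_fiberwise_of_maps_to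
    (s := SS n) (g := cls n) (t := Finset.range (n+1))
    (fun A _ => Finset.mem_range.mpr (Nat.lt_succ_of_le (cls_le n A)))
    (fun A => (X : ℚ[X]) ^ A.card)
  rw [← hfib, Finset.sum_range_succ', fiber_zero, add_comm]
  congr 1
  rw [Finset.mul_sum]
  refine Finset.sum_congr rfl ?_
  intro j hj
  rw [Finset.mem_range] at hj
  rw [fiber_sum n j (by omega), catppA_eq, catA_eq]
end
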